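/- arXiv:2004.05152 — 6 statements merged into one kernel-verified Lean document; each statement's English description precedes it below -/
import Mathlib

section
/- Suppose P, Q, R are holomorphic functions on the upper half plane satisfying Ramanujan's system DP = (P^2 - Q)/12, DQ = (PQ - R)/3, DR = (PR - Q^2)/2 where D = (1/(2πi)) d/dτ, and suppose Q^3 - R^2 is nowhere zero. Define j = 12^3 · Q^3/(Q^3 - R^2). Then Dj/j = -R/Q, i.e. the logarithmic derivative of j equals -R/Q. -/
open Complex

/-- Ramanujan's system implies `Dj/j = -R/Q` for `j = 1728 Q^3/(Q^3 - R^2)`. -/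
theorem ramanujan_logderiv_j (P Q R j : ℂ → ℂ)
    (hPd : DifferentiableOn ℂ P {z : ℂ | 0 < z.im})
    (hQd : DifferentiableOn ℂ Q {z : ℂ | 0 < z.im})
    (hRd : DifferentiableOn ℂ R {z : ℂ | 0 < z.im})
    (hP : ∀ τ : ℂ, 0 < τ.im →
      deriv P τ = (2 * (Real.pi : ℂ) * I) * ((P τ ^ 2 - Q τ) / 12))
    (hQ : ∀ τ : ℂ, 0 < τ.im →
      deriv Q τ = (2 * (Real.pi : ℂ) * I) * ((P τ * Q τ - R τ) / 3))
    (hR : ∀ τ : ℂ, 0 < τ.im →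
      deriv R τ = (2 * (Real.pi : ℂ) * I) * ((P τ * R τ - Q τ ^ 2) / 2))
    (hQ0 : ∀ τ : ℂ, 0 < τ.im → Q τ ≠ 0)
    (hΔ : ∀ τ : ℂ, 0 < τ.im → Q τ ^ 3 - R τ ^ 2 ≠ 0)
    (hj : ∀ τ : ℂ, 0 < τ.im →
      j τ = 1728 * Q τ ^ 3 / (Q τ ^ 3 - R τ ^ 2)) :
    ∀ τ : ℂ, 0 < τ.im →
      deriv j τ / (2 * (Real.pi : ℂ) * I) / j τ = -(R τ / Q τ) := by
  intro τ hτ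
  have hopen : IsOpen {z : ℂ | 0 < z.im} := isOpen_lt continuous_const Complex.continuous_im
  have hmem : {z : ℂ | 0 < z.im} ∈ nhds τ := hopen.mem_nhds hτ
  have hQat : DifferentiableAt ℂ Q τ := (hQd τ hτ).differentiableAt hmem
  have hRat : DifferentiableAt ℂ R τ := (hRd τ hτ).differentiableAt hmem
  have hnum : HasDerivAt (fun t => 1728 * Q t ^ 3)
      (1728 * (3 * Q τ ^ 2 * deriv Q τ)) τ := by
    have h := (hQat.hasDerivAt.pow 3).const_mul (1728 : ℂ)
    exact h.congr_deriv (by push_cast; ring)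
  have hden : HasDerivAt (fun t => Q t ^ 3 - R t ^ 2)
      (3 * Q τ ^ 2 * deriv Q τ - 2 * R τ * deriv R τ) τ := by
    have h := (hQat.hasDerivAt.pow 3).sub (hRat.hasDerivAt.pow 2)
    exact h.congr_deriv (by push_cast; ring)
  have hdiv := hnum.div hden (hΔ τ hτ)
  have hjd : deriv j τ = (1728 * (3 * Q τ ^ 2 * deriv Q τ) * (Q τ ^ 3 - R τ ^ 2) -
      1728 * Q τ ^ 3 * (3 * Q τ ^ 2 * deriv Q τ - 2 * R τ * deriv R τ)) /
      (Q τ ^ 3 - R τ ^ 2) ^ 2 := by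
    have heq : j =ᶠ[nhds τ] fun t => 1728 * Q t ^ 3 / (Q t ^ 3 - R t ^ 2) :=
      Filter.eventuallyEq_of_mem hmem hj
    rw [heq.deriv_eq]; exact hdiv.deriv
  have hπ : (2 * (Real.pi : ℂ) * I) ≠ 0 := by
    simp [Real.pi_ne_zero, I_ne_zero]
  have hq0 := hQ0 τ hτ
  have hd0 := hΔ τ hτ
  have hjne : j τ ≠ 0 := by
    rw [hj τ hτ]
    exact div_ne_zero (by simp [pow_ne_zero, hq0]) hd0
  have key : deriv j τ * Q τ = -(R τ) * (2 * (Real.pi : ℂ) * I * j τ) := by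
    rw [hjd, hj τ hτ, hQ τ hτ, hR τ hτ]
    field_simp
    ring
  rw [div_div, ← neg_div]
  rw [div_eq_div_iff (mul_ne_zero hπ hjne) hq0]
  linear_combination key
end

section
/- Let j and λ be meromorphic functions related by j = 256·(λ^2 - λ + 1)^3/(λ^2(λ-1)^2). If j satisfies the Schwarzian equation {j,τ} + ((j^2 - 1968 j + 2654208)/(2 j^2 (j-1728)^2))(j')^2 = 0, then λ satisfies {λ,τ} + ((λ^2 - λ + 1)/(2λ^2(λ-1)^2))(λ')^2 = 0. -/
open Complex Filter

private lemma hdF (z : ℂ) (h0 : z ≠ 0) (h1 : z - 1 ≠ 0) :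
    HasDerivAt (fun z : ℂ => 256 * (z ^ 2 - z + 1) ^ 3 / (z ^ 2 * (z - 1) ^ 2))
      ((512 - 1792*z + 2304*z^2 - 1280*z^3 - 1280*z^4 + 2304*z^5 - 1792*z^6 + 512*z^7)
        / (z ^ 3 * (z - 1) ^ 3)) z := by
  have hnum : HasDerivAt (fun z : ℂ => 256 * (z ^ 2 - z + 1) ^ 3)
      (256 * (3 * (z ^ 2 - z + 1) ^ 2 * (2 * z - 1))) z := by
    have h := ((((hasDerivAt_pow 2 z).sub (hasDerivAt_id z)).add_const 1).pow 3).const_mul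
      (256 : ℂ)
    refine h.congr_deriv ?_
    simp
  have hden : HasDerivAt (fun z : ℂ => z ^ 2 * (z - 1) ^ 2)
      (2 * z * (z - 1) ^ 2 + z ^ 2 * (2 * (z - 1))) z := by
    have h := (hasDerivAt_pow 2 z).mul (((hasDerivAt_id z).sub_const 1).pow 2)
    simp only [id_eq, Function.comp_apply] at h
    refine h.congr_deriv ?_
    simp
  have hd0 : z ^ 2 * (z - 1) ^ 2 ≠ 0 := mul_ne_zero (pow_ne_zero _ h0) (pow_ne_zero _ h1)
  have h := hnum.div hden hd0
  refine h.congr_deriv ?_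
  field_simp
  ring

private lemma hdF1 (z : ℂ) (h0 : z ≠ 0) (h1 : z - 1 ≠ 0) :
    HasDerivAt (fun z : ℂ =>
        (512 - 1792*z + 2304*z^2 - 1280*z^3 - 1280*z^4 + 2304*z^5 - 1792*z^6 + 512*z^7)
          / (z ^ 3 * (z - 1) ^ 3))
      ((1536 - 6656*z + 11264*z^2 - 9216*z^3 + 5120*z^4 - 2048*z^5 + 3072*z^6 - 2048*z^7
          + 512*z^8) / (z ^ 4 * (z - 1) ^ 4)) z := by
  have hnum : HasDerivAt (fun z : ℂ =>
      512 - 1792*z + 2304*z^2 - 1280*z^3 - 1280*z^4 + 2304*z^5 - 1792*z^6 + 512*z^7)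
      (-1792 + 4608*z - 3840*z^2 - 5120*z^3 + 11520*z^4 - 10752*z^5 + 3584*z^6) z := by
    have h := (((((((hasDerivAt_const z (512:ℂ)).sub ((hasDerivAt_id z).const_mul 1792)).add
      ((hasDerivAt_pow 2 z).const_mul 2304)).sub ((hasDerivAt_pow 3 z).const_mul 1280)).sub
      ((hasDerivAt_pow 4 z).const_mul 1280)).add ((hasDerivAt_pow 5 z).const_mul 2304)).sub
      ((hasDerivAt_pow 6 z).const_mul 1792)).add ((hasDerivAt_pow 7 z).const_mul 512)
    simp only [id_eq, Function.comp_apply] at h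
    refine h.congr_deriv ?_
    simp
    ring
  have hden : HasDerivAt (fun z : ℂ => z ^ 3 * (z - 1) ^ 3)
      (3 * z ^ 2 * (z - 1) ^ 3 + z ^ 3 * (3 * (z - 1) ^ 2)) z := by
    have h := (hasDerivAt_pow 3 z).mul (((hasDerivAt_id z).sub_const 1).pow 3)
    simp only [id_eq, Function.comp_apply] at h
    refine h.congr_deriv ?_
    simp
  have hd0 : z ^ 3 * (z - 1) ^ 3 ≠ 0 := mul_ne_zero (pow_ne_zero _ h0) (pow_ne_zero _ h1)
  have h := hnum.div hden hd0
  refine h.congr_deriv ?_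
  field_simp
  ring

private lemma hdF2 (z : ℂ) (h0 : z ≠ 0) (h1 : z - 1 ≠ 0) :
    HasDerivAt (fun z : ℂ =>
        (1536 - 6656*z + 11264*z^2 - 9216*z^3 + 5120*z^4 - 2048*z^5 + 3072*z^6 - 2048*z^7
          + 512*z^8) / (z ^ 4 * (z - 1) ^ 4))
      ((6144 - 32256*z + 69120*z^2 - 76800*z^3 + 46080*z^4 - 18432*z^5)
        / (z ^ 5 * (z - 1) ^ 5)) z := by
  have hnum : HasDerivAt (fun z : ℂ =>
      1536 - 6656*z + 11264*z^2 - 9216*z^3 + 5120*z^4 - 2048*z^5 + 3072*z^6 - 2048*z^7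
        + 512*z^8)
      (-6656 + 22528*z - 27648*z^2 + 20480*z^3 - 10240*z^4 + 18432*z^5 - 14336*z^6
        + 4096*z^7) z := by
    have h := ((((((((hasDerivAt_const z (1536:ℂ)).sub ((hasDerivAt_id z).const_mul 6656)).add
      ((hasDerivAt_pow 2 z).const_mul 11264)).sub ((hasDerivAt_pow 3 z).const_mul 9216)).add
      ((hasDerivAt_pow 4 z).const_mul 5120)).sub ((hasDerivAt_pow 5 z).const_mul 2048)).add
      ((hasDerivAt_pow 6 z).const_mul 3072)).sub ((hasDerivAt_pow 7 z).const_mul 2048)).add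
      ((hasDerivAt_pow 8 z).const_mul 512)
    simp only [id_eq, Function.comp_apply] at h
    refine h.congr_deriv ?_
    simp
    ring
  have hden : HasDerivAt (fun z : ℂ => z ^ 4 * (z - 1) ^ 4)
      (4 * z ^ 3 * (z - 1) ^ 4 + z ^ 4 * (4 * (z - 1) ^ 3)) z := by
    have h := (hasDerivAt_pow 4 z).mul (((hasDerivAt_id z).sub_const 1).pow 4)
    simp only [id_eq, Function.comp_apply] at h
    refine h.congr_deriv ?_
    simp
  have hd0 : z ^ 4 * (z - 1) ^ 4 ≠ 0 := mul_ne_zero (pow_ne_zero _ h0) (pow_ne_zero _ h1)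
  have h := hnum.div hden hd0
  refine h.congr_deriv ?_
  field_simp
  ring

private lemma hdp (z : ℂ) :
    HasDerivAt (fun z : ℂ => (2 * z - 1) * (z - 2) * (z + 1) * (z ^ 2 - z + 1))
      (-5 + 4*z + 6*z^2 - 20*z^3 + 10*z^4) z := by
  have h := (((((hasDerivAt_id z).const_mul 2).sub_const 1).mul
    ((hasDerivAt_id z).sub_const 2)).mul ((hasDerivAt_id z).add_const 1)).mul
    (((hasDerivAt_pow 2 z).sub (hasDerivAt_id z)).add_const 1)
  simp only [id_eq, Function.comp_apply] at h
  refine h.congr_deriv ?_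
  simp
  ring

private lemma mulA1 (u3 u1 J K : ℂ) (hu1 : u1 ≠ 0) :
    u3 / u1 * (u1 ^ 2 * (2 * J ^ 2 * K ^ 2)) = 2 * u3 * u1 * J ^ 2 * K ^ 2 := by
  field_simp

private lemma mulA2 (u2 u1 J K : ℂ) (hu1 : u1 ≠ 0) :
    3 / 2 * (u2 / u1) ^ 2 * (u1 ^ 2 * (2 * J ^ 2 * K ^ 2)) = 3 * u2 ^ 2 * J ^ 2 * K ^ 2 := by
  field_simp

private lemma mulA3 (u1 J K : ℂ) (hJ : J ≠ 0) (hK : K ≠ 0) :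
    (J ^ 2 - 1968 * J + 2654208) / (2 * J ^ 2 * K ^ 2) * u1 ^ 2 * (u1 ^ 2 * (2 * J ^ 2 * K ^ 2))
    = (J ^ 2 - 1968 * J + 2654208) * u1 ^ 4 := by
  field_simp

private lemma dm2 (X w y : ℂ) (hw : w ≠ 0) : X / w * y * w = X * y := by
  field_simp

private lemma dm3 (X w y r : ℂ) (hw : w ≠ 0) : X / w * y * (w * r) = X * y * r := by
  field_simp

private lemma mulB1 (u b W : ℂ) (hb : b ≠ 0) :
    u / b * (2 * b ^ 2 * W) = 2 * u * b * W := by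
  field_simp

private lemma mulB2 (c b W : ℂ) (hb : b ≠ 0) :
    3 / 2 * (c / b) ^ 2 * (2 * b ^ 2 * W) = 3 * c ^ 2 * W := by
  field_simp

set_option maxHeartbeats 1000000 in
/-- If `j = 256 (λ² - λ + 1)³ / (λ²(λ-1)²)` satisfies the Schwarzian equation for `j`,
then `λ` satisfies the Schwarzian equation `{λ,τ} + ((λ²-λ+1)/(2λ²(λ-1)²)) (λ')² = 0`. -/
theorem schwarzian_equation_lambda (l j : ℂ → ℂ)
    (hla : ∀ τ : ℂ, 0 < τ.im → AnalyticAt ℂ l τ)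
    (hl0 : ∀ τ : ℂ, 0 < τ.im → l τ ≠ 0)
    (hl1 : ∀ τ : ℂ, 0 < τ.im → l τ - 1 ≠ 0)
    (hl' : ∀ τ : ℂ, 0 < τ.im → deriv l τ ≠ 0)
    (hj : ∀ τ : ℂ, 0 < τ.im →
      j τ = 256 * (l τ ^ 2 - l τ + 1) ^ 3 / (l τ ^ 2 * (l τ - 1) ^ 2))
    (hSj : ∀ τ : ℂ, 0 < τ.im →
      (deriv (deriv (deriv j)) τ / deriv j τ
          - (3 / 2) * (deriv (deriv j) τ / deriv j τ) ^ 2)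
        + (j τ ^ 2 - 1968 * j τ + 2654208)
            / (2 * j τ ^ 2 * (j τ - 1728) ^ 2) * (deriv j τ) ^ 2 = 0) :
    ∀ τ : ℂ, 0 < τ.im →
      (deriv (deriv (deriv l)) τ / deriv l τ
          - (3 / 2) * (deriv (deriv l) τ / deriv l τ) ^ 2)
        + (l τ ^ 2 - l τ + 1) / (2 * l τ ^ 2 * (l τ - 1) ^ 2) * (deriv l τ) ^ 2 = 0 := by
  have hUo : IsOpen {τ : ℂ | 0 < τ.im} := isOpen_lt continuous_const Complex.continuous_im
  have hA : AnalyticOnNhd ℂ l {τ : ℂ | 0 < τ.im} := fun τ hτ => hla τ hτ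
  have hA1 : AnalyticOnNhd ℂ (deriv l) {τ : ℂ | 0 < τ.im} := hA.deriv
  have hA2 : AnalyticOnNhd ℂ (deriv (deriv l)) {τ : ℂ | 0 < τ.im} := hA1.deriv
  have hld1 : ∀ t : ℂ, 0 < t.im → HasDerivAt l (deriv l t) t :=
    fun t ht => (hA t ht).differentiableAt.hasDerivAt
  have hld2 : ∀ t : ℂ, 0 < t.im → HasDerivAt (deriv l) (deriv (deriv l) t) t :=
    fun t ht => (hA1 t ht).differentiableAt.hasDerivAt
  have hld3 : ∀ t : ℂ, 0 < t.im → HasDerivAt (deriv (deriv l)) (deriv (deriv (deriv l)) t) t :=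
    fun t ht => (hA2 t ht).differentiableAt.hasDerivAt
  have hjd1 : ∀ t : ℂ, 0 < t.im → HasDerivAt j
      (256 * (l t ^ 2 - l t + 1) ^ 2 * ((2 * l t - 1) * (l t - 2) * (l t + 1)) / (l t ^ 3 * (l t - 1) ^ 3) * deriv l t) t := by
    intro t ht
    have h := (hdF (l t) (hl0 t ht) (hl1 t ht)).comp t (hld1 t ht)
    have h2 := h.congr_of_eventuallyEq
      (eventually_of_mem (hUo.mem_nhds ht) (fun x hx => hj x hx))
    refine h2.congr_deriv ?_
    ring
  have hjd2 : ∀ t : ℂ, 0 < t.im → HasDerivAt (deriv j)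
      ((1536 - 6656 * l t + 11264 * l t ^ 2 - 9216 * l t ^ 3 + 5120 * l t ^ 4 - 2048 * l t ^ 5 + 3072 * l t ^ 6 - 2048 * l t ^ 7 + 512 * l t ^ 8) / (l t ^ 4 * (l t - 1) ^ 4) * deriv l t ^ 2
        + 256 * (l t ^ 2 - l t + 1) ^ 2 * ((2 * l t - 1) * (l t - 2) * (l t + 1)) / (l t ^ 3 * (l t - 1) ^ 3) * deriv (deriv l) t) t := by
    intro t ht
    have hev : deriv j =ᶠ[nhds t] (fun x =>
        (512 - 1792 * l x + 2304 * l x ^ 2 - 1280 * l x ^ 3 - 1280 * l x ^ 4 + 2304 * l x ^ 5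
          - 1792 * l x ^ 6 + 512 * l x ^ 7) / (l x ^ 3 * (l x - 1) ^ 3) * deriv l x) :=
      eventually_of_mem (hUo.mem_nhds ht) (fun x hx => by rw [(hjd1 x hx).deriv]; ring)
    have h := ((((hdF1 (l t) (hl0 t ht) (hl1 t ht)).comp t (hld1 t ht)).mul
      (hld2 t ht)).congr_of_eventuallyEq hev)
    simp only [Function.comp_apply] at h
    refine h.congr_deriv ?_
    ring
  have hjd3 : ∀ t : ℂ, 0 < t.im → HasDerivAt (deriv (deriv j))
      ((6144 - 32256 * l t + 69120 * l t ^ 2 - 76800 * l t ^ 3 + 46080 * l t ^ 4 - 18432 * l t ^ 5) / (l t ^ 5 * (l t - 1) ^ 5) * deriv l t ^ 3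
        + 3 * ((1536 - 6656 * l t + 11264 * l t ^ 2 - 9216 * l t ^ 3 + 5120 * l t ^ 4 - 2048 * l t ^ 5 + 3072 * l t ^ 6 - 2048 * l t ^ 7 + 512 * l t ^ 8) / (l t ^ 4 * (l t - 1) ^ 4)) * deriv l t * deriv (deriv l) t
        + 256 * (l t ^ 2 - l t + 1) ^ 2 * ((2 * l t - 1) * (l t - 2) * (l t + 1)) / (l t ^ 3 * (l t - 1) ^ 3) * deriv (deriv (deriv l)) t) t := by
    intro t ht
    have hev : deriv (deriv j) =ᶠ[nhds t] (fun x =>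
        (1536 - 6656 * l x + 11264 * l x ^ 2 - 9216 * l x ^ 3 + 5120 * l x ^ 4 - 2048 * l x ^ 5
          + 3072 * l x ^ 6 - 2048 * l x ^ 7 + 512 * l x ^ 8) / (l x ^ 4 * (l x - 1) ^ 4)
            * deriv l x ^ 2
        + (512 - 1792 * l x + 2304 * l x ^ 2 - 1280 * l x ^ 3 - 1280 * l x ^ 4 + 2304 * l x ^ 5
          - 1792 * l x ^ 6 + 512 * l x ^ 7) / (l x ^ 3 * (l x - 1) ^ 3) * deriv (deriv l) x) :=
      eventually_of_mem (hUo.mem_nhds ht) (fun x hx => by rw [(hjd2 x hx).deriv]; ring)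
    have h := (((((hdF2 (l t) (hl0 t ht) (hl1 t ht)).comp t (hld1 t ht)).mul
      ((hld2 t ht).pow 2)).add
      (((hdF1 (l t) (hl0 t ht) (hl1 t ht)).comp t (hld1 t ht)).mul
        (hld3 t ht))).congr_of_eventuallyEq hev)
    simp only [Function.comp_apply] at h
    refine h.congr_deriv ?_
    simp only [Pi.pow_apply, Nat.reduceSub, pow_one]
    push_cast; ring
  have key : ∀ x : ℂ, 0 < x.im →
      (2 * l x - 1) * (l x - 2) * (l x + 1) * (l x ^ 2 - l x + 1) ≠ 0 →
      (deriv (deriv (deriv l)) x / deriv l x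
          - (3 / 2) * (deriv (deriv l) x / deriv l x) ^ 2)
        + (l x ^ 2 - l x + 1) / (2 * l x ^ 2 * (l x - 1) ^ 2) * (deriv l x) ^ 2 = 0 := by
    intro x hx hprod
    have h21 : 2 * l x - 1 ≠ 0 := fun h => hprod (by rw [h]; ring)
    have h22 : l x - 2 ≠ 0 := fun h => hprod (by rw [h]; ring)
    have h23 : l x + 1 ≠ 0 := fun h => hprod (by rw [h]; ring)
    have hP : l x ^ 2 - l x + 1 ≠ 0 := fun h => hprod (by rw [h]; ring)
    have ha : l x ≠ 0 := hl0 x hx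
    have ha1 : l x - 1 ≠ 0 := hl1 x hx
    have hb : deriv l x ≠ 0 := hl' x hx
    have hQ : (2 * l x - 1) * (l x - 2) * (l x + 1) ≠ 0 :=
      mul_ne_zero (mul_ne_zero h21 h22) h23
    have hN1f : 256 * (l x ^ 2 - l x + 1) ^ 2 * ((2 * l x - 1) * (l x - 2) * (l x + 1)) ≠ 0 :=
      mul_ne_zero (mul_ne_zero (by norm_num) (pow_ne_zero _ hP)) hQ
    have hw2 : (l x ^ 2 * (l x - 1) ^ 2) ≠ 0 := mul_ne_zero (pow_ne_zero _ ha) (pow_ne_zero _ ha1)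
    have hw3 : (l x ^ 3 * (l x - 1) ^ 3) ≠ 0 := mul_ne_zero (pow_ne_zero _ ha) (pow_ne_zero _ ha1)
    have hw4 : (l x ^ 4 * (l x - 1) ^ 4) ≠ 0 := mul_ne_zero (pow_ne_zero _ ha) (pow_ne_zero _ ha1)
    have hw5 : (l x ^ 5 * (l x - 1) ^ 5) ≠ 0 := mul_ne_zero (pow_ne_zero _ ha) (pow_ne_zero _ ha1)
    have E1 := (hjd1 x hx).deriv
    have E2 := (hjd2 x hx).deriv
    have E3 := (hjd3 x hx).deriv
    have hu1 : deriv j x ≠ 0 := by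
      rw [E1]; exact mul_ne_zero (div_ne_zero hN1f hw3) hb
    have hJ : j x ≠ 0 := by
      rw [hj x hx]
      exact div_ne_zero (mul_ne_zero (by norm_num) (pow_ne_zero _ hP)) hw2
    have sK : (j x - 1728) * (l x ^ 2 * (l x - 1) ^ 2) = 64 * ((2 * l x - 1) * (l x - 2) * (l x + 1)) ^ 2 := by
      rw [hj x hx]; field_simp; ring
    have hK : j x - 1728 ≠ 0 := by
      intro h
      rw [h, zero_mul] at sK
      exact (mul_ne_zero (by norm_num : (64 : ℂ) ≠ 0) (pow_ne_zero _ hQ)) sK.symm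
    have s1 : deriv j x * (l x ^ 3 * (l x - 1) ^ 3) = 256 * (l x ^ 2 - l x + 1) ^ 2 * ((2 * l x - 1) * (l x - 2) * (l x + 1)) * deriv l x := by
      rw [E1]; field_simp
    have s2 : deriv (deriv j) x * (l x ^ 4 * (l x - 1) ^ 4) = (1536 - 6656 * l x + 11264 * l x ^ 2 - 9216 * l x ^ 3 + 5120 * l x ^ 4 - 2048 * l x ^ 5 + 3072 * l x ^ 6 - 2048 * l x ^ 7 + 512 * l x ^ 8) * deriv l x ^ 2 + 256 * (l x ^ 2 - l x + 1) ^ 2 * ((2 * l x - 1) * (l x - 2) * (l x + 1)) * deriv (deriv l) x * (l x * (l x - 1)) := by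
      rw [E2]
      have i1 := dm2 (1536 - 6656 * l x + 11264 * l x ^ 2 - 9216 * l x ^ 3 + 5120 * l x ^ 4 - 2048 * l x ^ 5 + 3072 * l x ^ 6 - 2048 * l x ^ 7 + 512 * l x ^ 8) (l x ^ 4 * (l x - 1) ^ 4) (deriv l x ^ 2) hw4
      have i2 := dm3 (256 * (l x ^ 2 - l x + 1) ^ 2 * ((2 * l x - 1) * (l x - 2) * (l x + 1))) (l x ^ 3 * (l x - 1) ^ 3) (deriv (deriv l) x) (l x * (l x - 1)) hw3
      linear_combination i1 + i2
    have s3 : deriv (deriv (deriv j)) x * (l x ^ 5 * (l x - 1) ^ 5) = (6144 - 32256 * l x + 69120 * l x ^ 2 - 76800 * l x ^ 3 + 46080 * l x ^ 4 - 18432 * l x ^ 5) * deriv l x ^ 3 + 3 * (1536 - 6656 * l x + 11264 * l x ^ 2 - 9216 * l x ^ 3 + 5120 * l x ^ 4 - 2048 * l x ^ 5 + 3072 * l x ^ 6 - 2048 * l x ^ 7 + 512 * l x ^ 8) * deriv l x * deriv (deriv l) x * (l x * (l x - 1)) + 256 * (l x ^ 2 - l x + 1) ^ 2 * ((2 * l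 x - 1) * (l x - 2) * (l x + 1)) * deriv (deriv (deriv l)) x * (l x ^ 2 * (l x - 1) ^ 2) := by
      rw [E3]
      have i1 := dm2 (6144 - 32256 * l x + 69120 * l x ^ 2 - 76800 * l x ^ 3 + 46080 * l x ^ 4 - 18432 * l x ^ 5) (l x ^ 5 * (l x - 1) ^ 5) (deriv l x ^ 3) hw5
      have i2 := dm3 (1536 - 6656 * l x + 11264 * l x ^ 2 - 9216 * l x ^ 3 + 5120 * l x ^ 4 - 2048 * l x ^ 5 + 3072 * l x ^ 6 - 2048 * l x ^ 7 + 512 * l x ^ 8) (l x ^ 4 * (l x - 1) ^ 4) (deriv l x * deriv (deriv l) x) (l x * (l x - 1)) hw4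
      have i3 := dm3 (256 * (l x ^ 2 - l x + 1) ^ 2 * ((2 * l x - 1) * (l x - 2) * (l x + 1))) (l x ^ 3 * (l x - 1) ^ 3) (deriv (deriv (deriv l)) x) (l x ^ 2 * (l x - 1) ^ 2) hw3
      linear_combination i1 + 3 * i2 + i3
    have sJ : j x * (l x ^ 2 * (l x - 1) ^ 2) = 256 * (l x ^ 2 - l x + 1) ^ 3 := by
      rw [hj x hx]; field_simp
    have HS := hSj x hx
    have A1 := mulA1 (deriv (deriv (deriv j)) x) (deriv j x) (j x) (j x - 1728) hu1
    have A2 := mulA2 (deriv (deriv j) x) (deriv j x) (j x) (j x - 1728) hu1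
    have A3 := mulA3 (deriv j x) (j x) (j x - 1728) hJ hK
    have HS3 : 2 * deriv (deriv (deriv j)) x * deriv j x * j x ^ 2 * (j x - 1728) ^ 2
        - 3 * deriv (deriv j) x ^ 2 * j x ^ 2 * (j x - 1728) ^ 2
        + (j x ^ 2 - 1968 * j x + 2654208) * deriv j x ^ 4 = 0 := by
      linear_combination (deriv j x ^ 2 * (2 * j x ^ 2 * (j x - 1728) ^ 2)) * HS - A1 + A2 - A3
    have Gbig : 2 * (deriv (deriv (deriv j)) x * (l x ^ 5 * (l x - 1) ^ 5)) * (deriv j x * (l x ^ 3 * (l x - 1) ^ 3)) * (j x * (l x ^ 2 * (l x - 1) ^ 2)) ^ 2 * ((j x - 1728) * (l x ^ 2 * (l x - 1) ^ 2)) ^ 2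
        - 3 * (deriv (deriv j) x * (l x ^ 4 * (l x - 1) ^ 4)) ^ 2 * (j x * (l x ^ 2 * (l x - 1) ^ 2)) ^ 2 * ((j x - 1728) * (l x ^ 2 * (l x - 1) ^ 2)) ^ 2
        + ((j x * (l x ^ 2 * (l x - 1) ^ 2)) ^ 2 - 1968 * (j x * (l x ^ 2 * (l x - 1) ^ 2)) * (l x ^ 2 * (l x - 1) ^ 2) + 2654208 * (l x ^ 2 * (l x - 1) ^ 2) ^ 2)
          * (deriv j x * (l x ^ 3 * (l x - 1) ^ 3)) ^ 4 = 0 := by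
      linear_combination (l x ^ 16 * (l x - 1) ^ 16) * HS3
    rw [s3, s1, s2, sJ, sK] at Gbig
    have Gfac : (2 * deriv (deriv (deriv l)) x * deriv l x * (l x ^ 2 * (l x - 1) ^ 2) - 3 * deriv (deriv l) x ^ 2 * (l x ^ 2 * (l x - 1) ^ 2) + (l x ^ 2 - l x + 1) * deriv l x ^ 4)
        * (17592186044416 * (l x ^ 2 - l x + 1) ^ 10 * ((2 * l x - 1) * (l x - 2) * (l x + 1)) ^ 6) = 0 := by
      linear_combination Gbig
    have hM : (17592186044416 : ℂ) * (l x ^ 2 - l x + 1) ^ 10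
        * ((2 * l x - 1) * (l x - 2) * (l x + 1)) ^ 6 ≠ 0 :=
      mul_ne_zero (mul_ne_zero (by norm_num) (pow_ne_zero _ hP)) (pow_ne_zero _ hQ)
    have Gsmall := (mul_eq_zero.mp Gfac).resolve_right hM
    have B1 := mulB1 (deriv (deriv (deriv l)) x) (deriv l x) ((l x ^ 2 * (l x - 1) ^ 2)) hb
    have B2 := mulB2 (deriv (deriv l) x) (deriv l x) ((l x ^ 2 * (l x - 1) ^ 2)) hb
    have B3 : (l x ^ 2 - l x + 1) / (2 * l x ^ 2 * (l x - 1) ^ 2) * (deriv l x) ^ 2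
        * (2 * deriv l x ^ 2 * (l x ^ 2 * (l x - 1) ^ 2))
        = (l x ^ 2 - l x + 1) * deriv l x ^ 4 := by
      field_simp
    have hexp : ((deriv (deriv (deriv l)) x / deriv l x
          - (3 / 2) * (deriv (deriv l) x / deriv l x) ^ 2)
        + (l x ^ 2 - l x + 1) / (2 * l x ^ 2 * (l x - 1) ^ 2) * (deriv l x) ^ 2)
        * (2 * deriv l x ^ 2 * (l x ^ 2 * (l x - 1) ^ 2))
        = 2 * deriv (deriv (deriv l)) x * deriv l x * (l x ^ 2 * (l x - 1) ^ 2)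
          - 3 * deriv (deriv l) x ^ 2 * (l x ^ 2 * (l x - 1) ^ 2)
          + (l x ^ 2 - l x + 1) * deriv l x ^ 4 := by
      linear_combination B1 - B2 + B3
    have hz := hexp.trans Gsmall
    have hne : 2 * deriv l x ^ 2 * (l x ^ 2 * (l x - 1) ^ 2) ≠ 0 :=
      mul_ne_zero (mul_ne_zero two_ne_zero (pow_ne_zero _ hb)) hw2
    exact (mul_eq_zero.mp hz).resolve_right hne
  intro τ hτ
  have hga : AnalyticAt ℂ (fun x : ℂ =>
      (2 * l x - 1) * (l x - 2) * (l x + 1) * (l x ^ 2 - l x + 1)) τ := by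
    have h := hla τ hτ
    exact ((((analyticAt_const.mul h).sub analyticAt_const).mul
      (h.sub analyticAt_const)).mul (h.add analyticAt_const)).mul
      (((h.pow 2).sub h).add analyticAt_const)
  rcases hga.eventually_eq_zero_or_eventually_ne_zero with hz | hnz
  · exfalso
    have hg0 : (2 * l τ - 1) * (l τ - 2) * (l τ + 1) * (l τ ^ 2 - l τ + 1) = 0 :=
      hz.self_of_nhds
    have hdg0 : deriv (fun x : ℂ =>
        (2 * l x - 1) * (l x - 2) * (l x + 1) * (l x ^ 2 - l x + 1)) τ = 0 := by
      have hz' : (fun x : ℂ => (2 * l x - 1) * (l x - 2) * (l x + 1) * (l x ^ 2 - l x + 1))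
          =ᶠ[nhds τ] (fun _ => (0 : ℂ)) := hz
      rw [hz'.deriv_eq]
      simp
    have hpd : HasDerivAt (fun x : ℂ =>
        (2 * l x - 1) * (l x - 2) * (l x + 1) * (l x ^ 2 - l x + 1))
        ((-5 + 4 * l τ + 6 * l τ ^ 2 - 20 * l τ ^ 3 + 10 * l τ ^ 4) * deriv l τ) τ :=
      (hdp (l τ)).comp τ (hld1 τ hτ)
    have h5 : (-5 + 4 * l τ + 6 * l τ ^ 2 - 20 * l τ ^ 3 + 10 * l τ ^ 4) * deriv l τ = 0 := by
      rw [← hpd.deriv]; exact hdg0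
    have h6 : -5 + 4 * l τ + 6 * l τ ^ 2 - 20 * l τ ^ 3 + 10 * l τ ^ 4 = 0 :=
      (mul_eq_zero.mp h5).resolve_right (hl' τ hτ)
    refine one_ne_zero (α := ℂ) ?_
    linear_combination (-106/243 + (8/27) * l τ + (140/81) * l τ ^ 2
        - (280/243) * l τ ^ 3) * hg0
      + (-91/243 + (62/243) * l τ - (2/81) * l τ ^ 2 - (112/243) * l τ ^ 3
        + (56/243) * l τ ^ 4) * h6
  · have him : ∀ᶠ x in nhdsWithin τ {τ}ᶜ, 0 < x.im :=
      eventually_nhdsWithin_of_eventually_nhds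
        (eventually_of_mem (hUo.mem_nhds hτ) (fun x hx => hx))
    have hev0 : (fun y : ℂ => (deriv (deriv (deriv l)) y / deriv l y
            - (3 / 2) * (deriv (deriv l) y / deriv l y) ^ 2)
          + (l y ^ 2 - l y + 1) / (2 * l y ^ 2 * (l y - 1) ^ 2) * (deriv l y) ^ 2)
        =ᶠ[nhdsWithin τ {τ}ᶜ] (fun _ => (0 : ℂ)) := by
      filter_upwards [hnz, him] with x hgx hx
      exact key x hx hgx
    have hb : deriv l τ ≠ 0 := hl' τ hτ
    have hden : 2 * l τ ^ 2 * (l τ - 1) ^ 2 ≠ 0 :=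
      mul_ne_zero (mul_ne_zero two_ne_zero (pow_ne_zero _ (hl0 τ hτ)))
        (pow_ne_zero _ (hl1 τ hτ))
    have hc : ContinuousAt (fun y : ℂ => (deriv (deriv (deriv l)) y / deriv l y
          - (3 / 2) * (deriv (deriv l) y / deriv l y) ^ 2)
        + (l y ^ 2 - l y + 1) / (2 * l y ^ 2 * (l y - 1) ^ 2) * (deriv l y) ^ 2) τ := by
      have c0 : ContinuousAt l τ := (hla τ hτ).continuousAt
      have c1 : ContinuousAt (deriv l) τ := (hA1 τ hτ).continuousAt
      have c2 : ContinuousAt (deriv (deriv l)) τ := (hA2 τ hτ).continuousAt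
      have c3 : ContinuousAt (deriv (deriv (deriv l))) τ := ((hA2.deriv) τ hτ).continuousAt
      exact (((c3.div c1 hb).sub (continuousAt_const.mul ((c2.div c1 hb).pow 2))).add
        ((((((c0.pow 2).sub c0).add continuousAt_const).div
          ((continuousAt_const.mul (c0.pow 2)).mul ((c0.sub continuousAt_const).pow 2))
          hden).mul (c1.pow 2))))
    exact tendsto_nhds_unique (hc.continuousWithinAt.tendsto)
      (Filter.Tendsto.congr' hev0.symm tendsto_const_nhds)
end

section
/- As an identity of rational functions in x: with j(x) = 27(1+8x)^3/(x(1-x)^3), the formal Schwarzian derivative {j, x} plus (j^2 - 1968 j + 2654208)/(2 j^2 (j-1728)^2)·(dj/dx)^2 equals -(8x^2 - 8x + 9)/(18 x^2 (x-1)^2) + (8x^2-8x+9)/(9x^2(x-1)^2). Equivalently: {j,x}·1 + ((j^2-1968j+2654208)/(2j^2(j-1728)^2))(dj/dx)^2 = (8x^2 - 8x + 9)/(18 x^2 (x-1)^2). -/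
open Complex

private noncomputable def F0 : ℂ → ℂ := fun x => 27 * (1 + 8 * x) ^ 3 / (x * (1 - x) ^ 3)

private noncomputable def F1 : ℂ → ℂ := fun y =>
  ((-27) + 108 * y + 7128 * y ^ 2 + 38016 * y ^ 3 + 13824 * y ^ 4) / (y ^ 2 * (1 - y) ^ 4)

private noncomputable def F2 : ℂ → ℂ := fun y =>
  (54 + (-270) * y + 540 * y ^ 2 + 66528 * y ^ 3 + 141696 * y ^ 4 + 27648 * y ^ 5)
    / (y ^ 3 * (1 - y) ^ 5)

private noncomputable def F3 : ℂ → ℂ := fun y =>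
  ((-162) + 972 * y + (-2430) * y ^ 2 + 3240 * y ^ 3 + 474336 * y ^ 4 + 622080 * y ^ 5
      + 82944 * y ^ 6) / (y ^ 4 * (1 - y) ^ 6)

private lemma one_sub_ne {y : ℂ} (hy1 : y ≠ 1) : (1 : ℂ) - y ≠ 0 :=
  sub_ne_zero.mpr (Ne.symm hy1)

private lemma keyF0 : ∀ y : ℂ, y ≠ 0 → y ≠ 1 → HasDerivAt F0 (F1 y) y := by
  intro y hy0 hy1
  have h1y : (1 : ℂ) - y ≠ 0 := one_sub_ne hy1
  have hA : HasDerivAt (fun x : ℂ => 1 + 8 * x) 8 y := by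
    simpa using ((hasDerivAt_id y).const_mul (8 : ℂ)).const_add 1
  have hN := (hA.pow 3).const_mul (27 : ℂ)
  have hB : HasDerivAt (fun x : ℂ => 1 - x) (-1) y := by
    simpa using (hasDerivAt_id y).const_sub 1
  have hD := (hasDerivAt_id y).mul (hB.pow 3)
  have hD0 : y * (1 - y) ^ 3 ≠ 0 := mul_ne_zero hy0 (pow_ne_zero _ h1y)
  have h := hN.div hD hD0
  convert h using 1
  · rfl
  · rfl
  · rfl
  unfold F1
  push_cast
  simp only [Pi.mul_apply, Pi.pow_apply, Pi.add_apply, id]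
  field_simp
  ring

private lemma keyF1 : ∀ y : ℂ, y ≠ 0 → y ≠ 1 → HasDerivAt F1 (F2 y) y := by
  intro y hy0 hy1
  have h1y : (1 : ℂ) - y ≠ 0 := one_sub_ne hy1
  have hN0 := ((hasDerivAt_id y).const_mul (108 : ℂ)).const_add (-27 : ℂ)
  have hN1 := hN0.add ((hasDerivAt_pow 2 y).const_mul (7128 : ℂ))
  have hN2 := hN1.add ((hasDerivAt_pow 3 y).const_mul (38016 : ℂ))
  have hN := hN2.add ((hasDerivAt_pow 4 y).const_mul (13824 : ℂ))
  have hB : HasDerivAt (fun x : ℂ => 1 - x) (-1) y := by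
    simpa using (hasDerivAt_id y).const_sub 1
  have hD := (hasDerivAt_pow 2 y).mul (hB.pow 4)
  have hD0 : y ^ 2 * (1 - y) ^ 4 ≠ 0 :=
    mul_ne_zero (pow_ne_zero _ hy0) (pow_ne_zero _ h1y)
  have h := hN.div hD hD0
  convert h using 1
  · rfl
  · rfl
  · rfl
  unfold F2
  push_cast
  simp only [Pi.mul_apply, Pi.pow_apply, Pi.add_apply, id]
  field_simp
  ring

private lemma keyF2 : ∀ y : ℂ, y ≠ 0 → y ≠ 1 → HasDerivAt F2 (F3 y) y := by
  intro y hy0 hy1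
  have h1y : (1 : ℂ) - y ≠ 0 := one_sub_ne hy1
  have hN0 := ((hasDerivAt_id y).const_mul ((-270) : ℂ)).const_add (54 : ℂ)
  have hN1 := hN0.add ((hasDerivAt_pow 2 y).const_mul (540 : ℂ))
  have hN2 := hN1.add ((hasDerivAt_pow 3 y).const_mul (66528 : ℂ))
  have hN3 := hN2.add ((hasDerivAt_pow 4 y).const_mul (141696 : ℂ))
  have hN := hN3.add ((hasDerivAt_pow 5 y).const_mul (27648 : ℂ))
  have hB : HasDerivAt (fun x : ℂ => 1 - x) (-1) y := by
    simpa using (hasDerivAt_id y).const_sub 1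
  have hD := (hasDerivAt_pow 3 y).mul (hB.pow 5)
  have hD0 : y ^ 3 * (1 - y) ^ 5 ≠ 0 :=
    mul_ne_zero (pow_ne_zero _ hy0) (pow_ne_zero _ h1y)
  have h := hN.div hD hD0
  convert h using 1
  · rfl
  · rfl
  · rfl
  unfold F3
  push_cast
  simp only [Pi.mul_apply, Pi.pow_apply, Pi.add_apply, id]
  field_simp
  ring

private lemma hopen : IsOpen {z : ℂ | z ≠ 0 ∧ z ≠ 1} := by
  have : {z : ℂ | z ≠ 0 ∧ z ≠ 1} = {z : ℂ | z ≠ 0} ∩ {z : ℂ | z ≠ 1} := rfl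
  rw [this]
  exact isOpen_ne.inter isOpen_ne

private lemma derivF0 : ∀ y : ℂ, y ≠ 0 → y ≠ 1 → deriv F0 y = F1 y :=
  fun y h0 h1 => (keyF0 y h0 h1).deriv

private lemma derivF1 : ∀ y : ℂ, y ≠ 0 → y ≠ 1 → deriv (deriv F0) y = F2 y := by
  intro y h0 h1
  have hev : deriv F0 =ᶠ[nhds y] F1 := by
    filter_upwards [hopen.mem_nhds ⟨h0, h1⟩] with z hz using derivF0 z hz.1 hz.2
  rw [hev.deriv_eq]
  exact (keyF1 y h0 h1).deriv

private lemma derivF2 : ∀ y : ℂ, y ≠ 0 → y ≠ 1 → deriv (deriv (deriv F0)) y = F3 y := by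
  intro y h0 h1
  have hev : deriv (deriv F0) =ᶠ[nhds y] F2 := by
    filter_upwards [hopen.mem_nhds ⟨h0, h1⟩] with z hz using derivF1 z hz.1 hz.2
  rw [hev.deriv_eq]
  exact (keyF2 y h0 h1).deriv

private lemma gen1 (p q n m : ℂ) (hq : q ≠ 0) (hn : n ≠ 0) (hm : m ≠ 0) :
    (p / q) / (n / m) = p * m / (q * n) := by
  field_simp

private lemma gen2 (p q n m : ℂ) (hq : q ≠ 0) (hn : n ≠ 0) (hm : m ≠ 0) :
    (3 / 2 : ℂ) * ((p / q) / (n / m)) ^ 2 = 3 * (p ^ 2 * m ^ 2) / (2 * (q ^ 2 * n ^ 2)) := by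
  field_simp
  
private lemma gen3 (a d b n m : ℂ) (ha : a ≠ 0) (hd : d ≠ 0) (hb : b ≠ 0) (hm : m ≠ 0) :
    ((a / d) ^ 2 - 1968 * (a / d) + 2654208) / (2 * (a / d) ^ 2 * (b / d) ^ 2) * (n / m) ^ 2
      = (a ^ 2 - 1968 * a * d + 2654208 * d ^ 2) * (d ^ 2 * n ^ 2)
          / (2 * (a ^ 2 * (b ^ 2 * m ^ 2))) := by
  have hQ : 2 * a ^ 2 * b ^ 2 ≠ 0 :=
    mul_ne_zero (mul_ne_zero two_ne_zero (pow_ne_zero _ ha)) (pow_ne_zero _ hb)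
  have h1 : (a / d) ^ 2 - 1968 * (a / d) + 2654208
      = (a ^ 2 - 1968 * a * d + 2654208 * d ^ 2) / d ^ 2 := by
    field_simp
  have h2 : 2 * (a / d) ^ 2 * (b / d) ^ 2 = 2 * a ^ 2 * b ^ 2 / d ^ 4 := by
    field_simp
  rw [h1, h2, gen1 _ _ _ _ (pow_ne_zero 2 hd) hQ (pow_ne_zero 4 hd), div_pow,
    div_mul_div_comm,
    div_eq_div_iff (mul_ne_zero (mul_ne_zero (pow_ne_zero 2 hd) hQ) (pow_ne_zero 2 hm))
      (mul_ne_zero two_ne_zero (mul_ne_zero (pow_ne_zero 2 ha)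
        (mul_ne_zero (pow_ne_zero 2 hb) (pow_ne_zero 2 hm))))]
  ring

set_option maxHeartbeats 2000000

/-- Rational-function identity: for `j(x) = 27(1+8x)³/(x(1-x)³)`, the formal Schwarzian
`{j,x}` plus `((j²-1968j+2654208)/(2j²(j-1728)²))(dj/dx)²` equals
`(8x²-8x+9)/(18x²(x-1)²)`. -/
theorem schwarzian_j_x_identity_level3
    (j : ℂ → ℂ)
    (hj : ∀ x : ℂ, j x = 27 * (1 + 8 * x) ^ 3 / (x * (1 - x) ^ 3)) :
    ∀ x : ℂ, x ≠ 0 → x ≠ 1 → deriv j x ≠ 0 → j x ≠ 0 → j x ≠ 1728 →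
      (deriv (deriv (deriv j)) x / deriv j x
          - (3 / 2) * (deriv (deriv j) x / deriv j x) ^ 2)
        + (j x ^ 2 - 1968 * j x + 2654208)
            / (2 * j x ^ 2 * (j x - 1728) ^ 2) * (deriv j x) ^ 2
      = (8 * x ^ 2 - 8 * x + 9) / (18 * x ^ 2 * (x - 1) ^ 2) := by
  have hjF : j = F0 := funext fun x => by rw [hj x]; rfl
  subst hjF
  intro x hx0 hx1 hdj hJ0 hJ1728
  have h1x : (1 : ℂ) - x ≠ 0 := one_sub_ne hx1
  have hx1' : x - 1 ≠ 0 := sub_ne_zero.mpr hx1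
  have hD0 : x * (1 - x) ^ 3 ≠ 0 := mul_ne_zero hx0 (pow_ne_zero _ h1x)
  have hJval : F0 x = 27 * (1 + 8 * x) ^ 3 / (x * (1 - x) ^ 3) := rfl
  have h27 : 27 * (1 + 8 * x) ^ 3 ≠ 0 := by
    intro h
    apply hJ0
    rw [hJval, h, zero_div]
  have hB : 27 * (1 + 8 * x) ^ 3 - 1728 * (x * (1 - x) ^ 3) ≠ 0 := by
    intro h
    apply hJ1728
    rw [hJval, div_eq_iff hD0]
    linear_combination h
  rw [derivF0 x hx0 hx1] at hdj
  have hN1 : ((-27 : ℂ) + 108 * x + 7128 * x ^ 2 + 38016 * x ^ 3 + 13824 * x ^ 4) ≠ 0 := by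
    intro h
    apply hdj
    unfold F1
    rw [h, zero_div]
  have hA1 : (1 : ℂ) + 8 * x ≠ 0 := by
    intro h
    apply h27
    rw [h]
    ring
  rw [derivF0 x hx0 hx1, derivF1 x hx0 hx1, derivF2 x hx0 hx1, hJval]
  have hsub : 27 * (1 + 8 * x) ^ 3 / (x * (1 - x) ^ 3) - 1728
      = (27 * (1 + 8 * x) ^ 3 - 1728 * (x * (1 - x) ^ 3)) / (x * (1 - x) ^ 3) := by
    field_simp
  rw [hsub]
  unfold F1 F2 F3
  have hm1 : x ^ 2 * (1 - x) ^ 4 ≠ 0 := mul_ne_zero (pow_ne_zero _ hx0) (pow_ne_zero _ h1x)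
  have hq2 : x ^ 3 * (1 - x) ^ 5 ≠ 0 := mul_ne_zero (pow_ne_zero _ hx0) (pow_ne_zero _ h1x)
  have hq3 : x ^ 4 * (1 - x) ^ 6 ≠ 0 := mul_ne_zero (pow_ne_zero _ hx0) (pow_ne_zero _ h1x)
  rw [gen1 _ _ _ _ hq3 hN1 hm1, gen2 _ _ _ _ hq2 hN1 hm1, gen3 _ _ _ _ _ h27 hD0 hB hm1]
  have d1 : _ ≠ (0 : ℂ) := mul_ne_zero hq3 hN1
  have d2 : _ ≠ (0 : ℂ) :=
    mul_ne_zero two_ne_zero (mul_ne_zero (pow_ne_zero 2 hq2) (pow_ne_zero 2 hN1))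
  have d3 : _ ≠ (0 : ℂ) :=
    mul_ne_zero two_ne_zero (mul_ne_zero (pow_ne_zero 2 h27)
      (mul_ne_zero (pow_ne_zero 2 hB) (pow_ne_zero 2 hm1)))
  rw [div_sub_div _ _ d1 d2, div_add_div _ _ (mul_ne_zero d1 d2) d3,
    div_eq_div_iff (mul_ne_zero (mul_ne_zero d1 d2) d3)
      (mul_ne_zero (mul_ne_zero (by norm_num : (18 : ℂ) ≠ 0) (pow_ne_zero 2 hx0))
        (pow_ne_zero 2 hx1'))]
  ring
end

section
/- Suppose P, Q, R satisfy the level-6 system DP = (27P^3 - 36P^2Q + 5PQ^2 + 4PR)/48, DQ = (-27P^2Q + 24PQ^2 - Q^3 + 4QR)/48, DR = (-729P^4 + 972P^3Q - 270P^2Q^2 + 12PQ^3 - Q^4 + 16R^2)/192. Let f = P/Q and regard P as a function of f. Then P''(f) + (-1/f + 1/(f-1) + 1/(f-1/9))·P'(f) - ((f - 1/3)/(3f^2(f-1)(f-1/9)))·P(f) = 0. -/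
set_option maxHeartbeats 1000000


open Complex Filter Topology Set Metric

private lemma piI_ne : ((Real.pi : ℂ) * I) ≠ 0 := by
  simp [Real.pi_ne_zero, I_ne_zero, Complex.ofReal_ne_zero]

private lemma tpi_ne : (2 * (Real.pi : ℂ) * I) ≠ 0 := by
  simp [Real.pi_ne_zero, I_ne_zero, Complex.ofReal_ne_zero]

/-- Level-6 system: `P` as a function of `f = P/Q` satisfies the Fuchsian equation
`P'' + (-1/f + 1/(f-1) + 1/(f-1/9))P' - ((f-1/3)/(3f²(f-1)(f-1/9)))P = 0`. -/
theorem level6_P_ode (P Q R f P1 P2 : ℂ → ℂ)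
    (hP : ∀ τ : ℂ, 0 < τ.im →
      deriv P τ = (2 * (Real.pi : ℂ) * I) *
        ((27 * P τ ^ 3 - 36 * P τ ^ 2 * Q τ + 5 * P τ * Q τ ^ 2 + 4 * P τ * R τ) / 48))
    (hQ : ∀ τ : ℂ, 0 < τ.im →
      deriv Q τ = (2 * (Real.pi : ℂ) * I) *
        ((-27 * P τ ^ 2 * Q τ + 24 * P τ * Q τ ^ 2 - Q τ ^ 3 + 4 * Q τ * R τ) / 48))
    (hR : ∀ τ : ℂ, 0 < τ.im →
      deriv R τ = (2 * (Real.pi : ℂ) * I) *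
        ((-729 * P τ ^ 4 + 972 * P τ ^ 3 * Q τ - 270 * P τ ^ 2 * Q τ ^ 2
            + 12 * P τ * Q τ ^ 3 - Q τ ^ 4 + 16 * R τ ^ 2) / 192))
    (hQ0 : ∀ τ : ℂ, 0 < τ.im → Q τ ≠ 0)
    (hf : ∀ τ : ℂ, 0 < τ.im → f τ = P τ / Q τ)
    (hf' : ∀ τ : ℂ, 0 < τ.im → deriv f τ ≠ 0)
    (hP1 : ∀ τ : ℂ, 0 < τ.im → P1 τ = deriv P τ / deriv f τ)
    (hP2 : ∀ τ : ℂ, 0 < τ.im → P2 τ = deriv P1 τ / deriv f τ) :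
    ∀ τ : ℂ, 0 < τ.im →
      P2 τ + (-(1 / f τ) + 1 / (f τ - 1) + 1 / (f τ - 1 / 9)) * P1 τ
        - ((f τ - 1 / 3) / (3 * f τ ^ 2 * (f τ - 1) * (f τ - 1 / 9))) * P τ = 0 := by
  have hUopen : IsOpen {τ : ℂ | 0 < τ.im} := isOpen_lt continuous_const Complex.continuous_im
  have hmem : ∀ {τ : ℂ}, 0 < τ.im → {τ : ℂ | 0 < τ.im} ∈ 𝓝 τ := fun h => hUopen.mem_nhds h
  -- f is differentiable everywhere on the upper half plane
  have hfd : ∀ τ : ℂ, 0 < τ.im → DifferentiableAt ℂ f τ := by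
    intro τ hτ; by_contra h
    exact hf' τ hτ (deriv_zero_of_not_differentiableAt h)
  have hfan : AnalyticOnNhd ℂ f {τ : ℂ | 0 < τ.im} :=
    DifferentiableOn.analyticOnNhd (fun σ hσ => (hfd σ hσ).differentiableWithinAt) hUopen
  have hdfd : ∀ τ : ℂ, 0 < τ.im → DifferentiableAt ℂ (deriv f) τ := fun τ hτ =>
    ((hfan.deriv) τ hτ).differentiableAt
  -- Step 1 : where f avoids {0, 1, 1/9}, Q is differentiable
  have keyQ : ∀ τ : ℂ, 0 < τ.im → f τ ≠ 0 → f τ ≠ 1 → f τ ≠ 1/9 →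
      DifferentiableAt ℂ Q τ := by
    intro τ hτ h0 h1 h9
    have hq0 := hQ0 τ hτ
    have hPne : P τ ≠ 0 := fun h => h0 (by rw [hf τ hτ, h, zero_div])
    have hPQ : P τ - Q τ ≠ 0 := by
      intro h; apply h1
      rw [hf τ hτ, show P τ = Q τ from by linear_combination h, div_self hq0]
    have h9PQ : 9 * P τ - Q τ ≠ 0 := by
      intro h; apply h9
      rw [hf τ hτ, show P τ = Q τ / 9 from by linear_combination h/9]
      field_simp
    by_contra hQd
    have hdQ0 : deriv Q τ = 0 := deriv_zero_of_not_differentiableAt hQd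
    have eQ : -27 * P τ ^ 2 * Q τ + 24 * P τ * Q τ ^ 2 - Q τ ^ 3 + 4 * Q τ * R τ = 0 := by
      have h := (hQ τ hτ).symm
      rw [hdQ0] at h
      rcases mul_eq_zero.mp h with h' | h'
      · exact absurd h' tpi_ne
      · field_simp at h'; linear_combination h'
    by_cases hPd : DifferentiableAt ℂ P τ
    · apply hQd
      have hev : Q =ᶠ[𝓝 τ] fun σ => P σ / f σ := by
        have hcont : ∀ᶠ σ in 𝓝 τ, f σ ≠ 0 := (hfd τ hτ).continuousAt.eventually_ne h0
        filter_upwards [hcont, hmem hτ] with σ hσ hσU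
        have hQσ := hQ0 σ hσU
        have hPσ : P σ ≠ 0 := fun h => hσ (by rw [hf σ hσU, h, zero_div])
        rw [hf σ hσU]
        field_simp
      exact hev.differentiableAt_iff.mpr (hPd.div (hfd τ hτ) h0)
    · have hdP0 : deriv P τ = 0 := deriv_zero_of_not_differentiableAt hPd
      have eP : 27 * P τ ^ 3 - 36 * P τ ^ 2 * Q τ + 5 * P τ * Q τ ^ 2 + 4 * P τ * R τ = 0 := by
        have h := (hP τ hτ).symm
        rw [hdP0] at h
        rcases mul_eq_zero.mp h with h' | h'
        · exact absurd h' tpi_ne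
        · field_simp at h'; linear_combination h'
      have hzero : 6 * Q τ * (P τ * (9 * P τ - Q τ) * (P τ - Q τ)) = 0 := by
        linear_combination Q τ * eP - P τ * eQ
      exact (mul_ne_zero (mul_ne_zero (by norm_num : (6:ℂ) ≠ 0) hq0)
        (mul_ne_zero (mul_ne_zero hPne h9PQ) hPQ)) hzero
  -- P is differentiable there as well
  have keyP : ∀ τ : ℂ, 0 < τ.im → f τ ≠ 0 → f τ ≠ 1 → f τ ≠ 1/9 →
      DifferentiableAt ℂ P τ := by
    intro τ hτ h0 h1 h9
    have hQd := keyQ τ hτ h0 h1 h9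
    have hev : P =ᶠ[𝓝 τ] fun σ => f σ * Q σ := by
      filter_upwards [hmem hτ] with σ hσ
      rw [hf σ hσ]
      exact (div_mul_cancel₀ _ (hQ0 σ hσ)).symm
    exact hev.differentiableAt_iff.mpr ((hfd τ hτ).mul hQd)
  -- Step 2 : formula for deriv f at points where P, Q are differentiable
  have keyF : ∀ τ : ℂ, 0 < τ.im → DifferentiableAt ℂ P τ → DifferentiableAt ℂ Q τ →
      deriv f τ = (Real.pi : ℂ) * I / 4 *
        (P τ * (9 * P τ - Q τ) * (P τ - Q τ)) / Q τ := by
    intro τ hτ hPd hQd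
    have hq0 := hQ0 τ hτ
    have hev : f =ᶠ[𝓝 τ] fun σ => P σ / Q σ := by
      filter_upwards [hmem hτ] with σ hσ; exact hf σ hσ
    rw [hev.deriv_eq, deriv_fun_div hPd hQd hq0, hP τ hτ, hQ τ hτ]
    field_simp
    ring
  -- Step 3 : f never takes the values 0, 1, 1/9
  have key3 : ∀ τ : ℂ, 0 < τ.im → f τ ≠ 0 ∧ f τ ≠ 1 ∧ f τ ≠ 1/9 := by
    intro τ0 hτ0
    have hGne : f τ0 * (9 * f τ0 - 1) * (f τ0 - 1) ≠ 0 →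
        (f τ0 ≠ 0 ∧ f τ0 ≠ 1 ∧ f τ0 ≠ 1/9) := by
      intro h
      refine ⟨?_, ?_, ?_⟩ <;> intro hc <;> apply h <;> rw [hc] <;> ring
    apply hGne
    intro hg0
    -- the auxiliary function g = G ∘ f
    set g : ℂ → ℂ := fun σ => f σ * (9 * f σ - 1) * (f σ - 1) with hgdef
    have hgd : ∀ σ : ℂ, 0 < σ.im →
        HasDerivAt g ((27 * f σ ^ 2 - 20 * f σ + 1) * deriv f σ) σ := by
      intro σ hσ
      have hd := (hfd σ hσ).hasDerivAt
      have h1 := (hd.fun_mul ((hd.const_mul (9:ℂ)).sub_const 1)).fun_mul (hd.sub_const 1)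
      refine h1.congr_deriv ?_
      ring
    have hGc : (27 * f τ0 ^ 2 - 20 * f τ0 + 1) ≠ 0 := by
      rcases mul_eq_zero.mp hg0 with h | h
      · rcases mul_eq_zero.mp h with h | h
        · rw [show f τ0 = 0 from h]; norm_num
        · rw [show f τ0 = 1/9 from by linear_combination h / 9]; norm_num
      · rw [show f τ0 = 1 from by linear_combination h]; norm_num
    have hgderne : (27 * f τ0 ^ 2 - 20 * f τ0 + 1) * deriv f τ0 ≠ 0 :=
      mul_ne_zero hGc (hf' τ0 hτ0)
    have hgval : ∀ x : ℂ, g x = f x * (9 * f x - 1) * (f x - 1) := fun _ => rfl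
    have hgτ0 : g τ0 = 0 := by rw [hgval, hg0]
    -- punctured neighbourhood where g ≠ 0
    have hev1 : ∀ᶠ σ in 𝓝[≠] τ0, g σ ≠ 0 := by
      have h := (hgd τ0 hτ0).eventually_ne (c := g τ0) hgderne
      filter_upwards [h] with σ hσ hc
      exact hσ (by rw [hc, hgτ0])
    have hev2 : ∀ᶠ σ in 𝓝[≠] τ0, 0 < σ.im :=
      mem_nhdsWithin_of_mem_nhds (hmem hτ0)
    rcases Metric.mem_nhdsWithin_iff.mp (hev1.and hev2) with ⟨ε, hε, hball⟩
    have hballim : ∀ σ ∈ Metric.ball τ0 ε, 0 < σ.im := by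
      intro σ hσ
      rcases eq_or_ne σ τ0 with rfl | hne
      · exact hτ0
      · exact (hball ⟨hσ, hne⟩).2
    have hballg : ∀ σ ∈ Metric.ball τ0 ε, σ ≠ τ0 → g σ ≠ 0 := fun σ hσ hne =>
      (hball ⟨hσ, hne⟩).1
    -- on the punctured ball, Q and P are differentiable
    have hballQ : ∀ σ ∈ Metric.ball τ0 ε, σ ≠ τ0 →
        DifferentiableAt ℂ Q σ ∧ DifferentiableAt ℂ P σ ∧
          f σ ≠ 0 ∧ f σ ≠ 1 ∧ f σ ≠ 1/9 := by
      intro σ hσ hne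
      have hgσ := hballg σ hσ hne
      have him := hballim σ hσ
      have h0 : f σ ≠ 0 := fun h => hgσ (by rw [hgval, h]; ring)
      have h1 : f σ ≠ 1 := fun h => hgσ (by rw [hgval, h]; ring)
      have h9 : f σ ≠ 1/9 := fun h => hgσ (by rw [hgval, h]; norm_num)
      exact ⟨keyQ σ him h0 h1 h9, keyP σ him h0 h1 h9, h0, h1, h9⟩
    -- w = g * Q is holomorphic on the punctured ball and w² extends
    set w : ℂ → ℂ := fun σ => g σ * Q σ with hwdef
    have hsq : ∀ σ ∈ Metric.ball τ0 ε,
        w σ * w σ = 4 / ((Real.pi : ℂ) * I) * (deriv f σ * g σ) := by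
      intro σ hσ
      rcases eq_or_ne σ τ0 with rfl | hne
      · show g σ * Q σ * (g σ * Q σ) = _
        rw [hgτ0]
        ring
      · obtain ⟨hQd, hPd, h0, h1, h9⟩ := hballQ σ hσ hne
        have him := hballim σ hσ
        have hq0 := hQ0 σ him
        show g σ * Q σ * (g σ * Q σ) = _
        rw [keyF σ him hPd hQd, hgval, hf σ him]
        have hPσ : P σ ≠ 0 := fun h => h0 (by rw [hf σ him, h, zero_div])
        rw [show ∀ X Y : ℂ, 4 / ((Real.pi:ℂ) * I) * ((Real.pi:ℂ) * I / 4 * X / Q σ * Y)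
            = X / Q σ * Y from fun X Y => by
          field_simp [Complex.ofReal_ne_zero.mpr Real.pi_ne_zero, I_ne_zero, hq0]]
        field_simp
    have hwmem : Metric.ball τ0 ε ∈ 𝓝 τ0 := Metric.ball_mem_nhds τ0 hε
    have hwsq_ev : (fun σ => w σ * w σ) =ᶠ[𝓝 τ0]
        fun σ => 4 / ((Real.pi : ℂ) * I) * (deriv f σ * g σ) := by
      filter_upwards [hwmem] with σ hσ; exact hsq σ hσ
    -- continuity of w at τ0
    have hwτ0 : w τ0 = 0 := by show g τ0 * Q τ0 = 0; rw [hgτ0]; ring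
    have hgcont : ContinuousAt g τ0 := (hgd τ0 hτ0).differentiableAt.continuousAt
    have hrhs_cont : ContinuousAt (fun σ => 4 / ((Real.pi : ℂ) * I) * (deriv f σ * g σ)) τ0 :=
      (continuousAt_const.mul ((hdfd τ0 hτ0).continuousAt.mul hgcont))
    have hsq_tendsto : Tendsto (fun σ => w σ * w σ) (𝓝 τ0) (𝓝 0) := by
      have h := hrhs_cont.tendsto
      have hval : (4 / ((Real.pi : ℂ) * I) * (deriv f τ0 * g τ0)) = 0 := by
        rw [hgτ0]; ring
      rw [hval] at h
      exact h.congr' hwsq_ev.symm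
    have hwnorm : Tendsto (fun σ => ‖w σ‖) (𝓝 τ0) (𝓝 0) := by
      have h1 : Tendsto (fun σ => ‖w σ‖ * ‖w σ‖) (𝓝 τ0) (𝓝 0) := by
        have := hsq_tendsto.norm
        simpa [norm_mul] using this
      have h2 := h1.sqrt
      simpa [Real.sqrt_mul_self (norm_nonneg _)] using h2
    have hwcont : ContinuousAt w τ0 := by
      show Tendsto w (𝓝 τ0) (𝓝 (w τ0))
      rw [hwτ0]
      exact tendsto_zero_iff_norm_tendsto_zero.mpr hwnorm
    have hwdiffOn : DifferentiableOn ℂ w (Metric.ball τ0 ε \ {τ0}) := by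
      intro σ hσ
      obtain ⟨hσb, hσne⟩ := hσ
      have hσne' : σ ≠ τ0 := hσne
      obtain ⟨hQd, _, _⟩ := hballQ σ hσb hσne'
      exact (((hgd σ (hballim σ hσb)).differentiableAt.mul hQd)).differentiableWithinAt
    have hwdiff : DifferentiableAt ℂ w τ0 :=
      (((Complex.differentiableOn_compl_singleton_and_continuousAt_iff hwmem).mp
        ⟨hwdiffOn, hwcont⟩).differentiableAt hwmem)
    -- derivative of w² at τ0 is zero, but the explicit formula gives a nonzero value
    have hd1 : deriv (fun σ => w σ * w σ) τ0 = 0 := by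
      rw [(hwdiff.hasDerivAt.fun_mul hwdiff.hasDerivAt).deriv, hwτ0]
      ring
    have hd2 : deriv (fun σ => 4 / ((Real.pi : ℂ) * I) * (deriv f σ * g σ)) τ0 =
        4 / ((Real.pi : ℂ) * I) * (deriv f τ0 * ((27 * f τ0 ^ 2 - 20 * f τ0 + 1) * deriv f τ0)) := by
      have h := (((hdfd τ0 hτ0).hasDerivAt.fun_mul (hgd τ0 hτ0)).const_mul
        (4 / ((Real.pi : ℂ) * I))).deriv
      rw [h, hgτ0]
      ring
    have := hwsq_ev.deriv_eq
    rw [hd1, hd2] at this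
    have h4 : (4 : ℂ) / ((Real.pi : ℂ) * I) ≠ 0 := by
      apply div_ne_zero (by norm_num) piI_ne
    exact (mul_ne_zero h4 (mul_ne_zero (hf' τ0 hτ0) hgderne)) this.symm
  -- Step 4 : global differentiability of P, Q, R and nonvanishing facts
  have hQd : ∀ τ : ℂ, 0 < τ.im → DifferentiableAt ℂ Q τ := fun τ hτ =>
    keyQ τ hτ (key3 τ hτ).1 (key3 τ hτ).2.1 (key3 τ hτ).2.2
  have hPd : ∀ τ : ℂ, 0 < τ.im → DifferentiableAt ℂ P τ := fun τ hτ =>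
    keyP τ hτ (key3 τ hτ).1 (key3 τ hτ).2.1 (key3 τ hτ).2.2
  have hQan : AnalyticOnNhd ℂ Q {τ : ℂ | 0 < τ.im} :=
    DifferentiableOn.analyticOnNhd (fun σ hσ => (hQd σ hσ).differentiableWithinAt) hUopen
  have hπ : (Real.pi : ℂ) ≠ 0 := Complex.ofReal_ne_zero.mpr Real.pi_ne_zero
  have hPne : ∀ τ : ℂ, 0 < τ.im → P τ ≠ 0 := fun τ hτ h =>
    (key3 τ hτ).1 (by rw [hf τ hτ, h, zero_div])
  have hPQ : ∀ τ : ℂ, 0 < τ.im → P τ - Q τ ≠ 0 := fun τ hτ h =>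
    (key3 τ hτ).2.1 (by
      rw [hf τ hτ, show P τ = Q τ from by linear_combination h, div_self (hQ0 τ hτ)])
  have h9PQ : ∀ τ : ℂ, 0 < τ.im → 9 * P τ - Q τ ≠ 0 := fun τ hτ h =>
    (key3 τ hτ).2.2 (by
      rw [hf τ hτ, show P τ = Q τ / 9 from by linear_combination h / 9]
      field_simp [hQ0 τ hτ])
  have hRd : ∀ τ : ℂ, 0 < τ.im → DifferentiableAt ℂ R τ := by
    intro τ hτ
    have hdQd : DifferentiableAt ℂ (deriv Q) τ := ((hQan.deriv) τ hτ).differentiableAt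
    have hev : R =ᶠ[𝓝 τ] fun σ => (24 / ((Real.pi : ℂ) * I) * deriv Q σ
        + 27 * P σ ^ 2 * Q σ - 24 * P σ * Q σ ^ 2 + Q σ ^ 3) / (4 * Q σ) := by
      filter_upwards [hmem hτ] with σ hσ
      rw [hQ σ hσ]
      field_simp [hπ, I_ne_zero, hQ0 σ hσ]
      ring
    refine hev.differentiableAt_iff.mpr (DifferentiableAt.div ?_
      ((differentiableAt_const _).mul (hQd τ hτ))
      (mul_ne_zero (by norm_num) (hQ0 τ hτ)))
    exact (((hdQd.const_mul _).add
        ((((hPd τ hτ).pow 2).const_mul 27).mul (hQd τ hτ))).sub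
        (((hPd τ hτ).const_mul 24).mul ((hQd τ hτ).pow 2))).add ((hQd τ hτ).pow 3)
  -- Step 5 : the final computation
  intro τ hτ
  obtain ⟨hf0, hf1, hf9⟩ := key3 τ hτ
  have hq0 := hQ0 τ hτ
  have hp0 := hPne τ hτ
  have hpq := hPQ τ hτ
  have h9pq := h9PQ τ hτ
  have hp := (hPd τ hτ).hasDerivAt
  have hqq := (hQd τ hτ).hasDerivAt
  have hrr := (hRd τ hτ).hasDerivAt
  have hNd : HasDerivAt
      (fun σ => (27 * P σ ^ 3 - 36 * P σ ^ 2 * Q σ + 5 * P σ * Q σ ^ 2 + 4 * P σ * R σ) * Q σ)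
      ((81 * P τ ^ 2 * deriv P τ
          - 72 * P τ * Q τ * deriv P τ - 36 * P τ ^ 2 * deriv Q τ
          + 5 * Q τ ^ 2 * deriv P τ + 10 * P τ * Q τ * deriv Q τ
          + 4 * R τ * deriv P τ + 4 * P τ * deriv R τ) * Q τ
        + (27 * P τ ^ 3 - 36 * P τ ^ 2 * Q τ + 5 * P τ * Q τ ^ 2 + 4 * P τ * R τ) * deriv Q τ) τ := by
    have h := (((((hp.fun_pow 3).const_mul (27:ℂ)).fun_sub
        (((hp.fun_pow 2).const_mul (36:ℂ)).fun_mul hqq)).fun_add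
        ((hp.const_mul (5:ℂ)).fun_mul (hqq.fun_pow 2))).fun_add
        ((hp.const_mul (4:ℂ)).fun_mul hrr)).fun_mul hqq
    refine h.congr_deriv ?_
    ring
  have hDd : HasDerivAt (fun σ => 6 * (P σ * (9 * P σ - Q σ) * (P σ - Q σ)))
      (6 * ((deriv P τ * (9 * P τ - Q τ) + P τ * (9 * deriv P τ - deriv Q τ)) * (P τ - Q τ)
        + P τ * (9 * P τ - Q τ) * (deriv P τ - deriv Q τ))) τ := by
    have h := ((hp.fun_mul ((hp.const_mul (9:ℂ)).fun_sub hqq)).fun_mul (hp.fun_sub hqq)).const_mul (6:ℂ)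
    convert h using 1
    try ring
  have hD0 : (fun σ => 6 * (P σ * (9 * P σ - Q σ) * (P σ - Q σ))) τ ≠ 0 :=
    mul_ne_zero (by norm_num) (mul_ne_zero (mul_ne_zero hp0 h9pq) hpq)
  have hP1ev : P1 =ᶠ[𝓝 τ] fun σ =>
      ((27 * P σ ^ 3 - 36 * P σ ^ 2 * Q σ + 5 * P σ * Q σ ^ 2 + 4 * P σ * R σ) * Q σ) /
        (6 * (P σ * (9 * P σ - Q σ) * (P σ - Q σ))) := by
    filter_upwards [hmem hτ] with σ hσ
    have hqσ := hQ0 σ hσ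
    have hpσ := hPne σ hσ
    have hpqσ := hPQ σ hσ
    have h9pqσ := h9PQ σ hσ
    rw [hP1 σ hσ, hP σ hσ, keyF σ hσ (hPd σ hσ) (hQd σ hσ)]
    have hF : (Real.pi : ℂ) * I / 4 * (P σ * (9 * P σ - Q σ) * (P σ - Q σ)) / Q σ ≠ 0 :=
      div_ne_zero (mul_ne_zero (div_ne_zero (mul_ne_zero hπ I_ne_zero) (by norm_num))
        (mul_ne_zero (mul_ne_zero hpσ h9pqσ) hpqσ)) hqσ
    have hD' : (6:ℂ) * (P σ * (9 * P σ - Q σ) * (P σ - Q σ)) ≠ 0 :=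
      mul_ne_zero (by norm_num) (mul_ne_zero (mul_ne_zero hpσ h9pqσ) hpqσ)
    rw [div_eq_div_iff hF hD']
    field_simp [hπ, I_ne_zero]
    ring
  have hP1deriv := (hNd.div hDd hD0).congr_of_eventuallyEq hP1ev
  have hdP1 := hP1deriv.deriv
  have hP1t : P1 τ = ((27 * P τ ^ 3 - 36 * P τ ^ 2 * Q τ + 5 * P τ * Q τ ^ 2 + 4 * P τ * R τ) * Q τ) /
      (6 * (P τ * (9 * P τ - Q τ) * (P τ - Q τ))) := hP1ev.eq_of_nhds
  have hFval : deriv f τ = ((Real.pi : ℂ) * I) * (P τ * (9 * P τ - Q τ) * (P τ - Q τ)) / (4 * Q τ) := by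
    rw [keyF τ hτ (hPd τ hτ) (hQd τ hτ)]
    field_simp
  have hKI : ((Real.pi : ℂ) * I) ≠ 0 := mul_ne_zero hπ I_ne_zero
  have hG : P τ * (9 * P τ - Q τ) * (P τ - Q τ) ≠ 0 := mul_ne_zero (mul_ne_zero hp0 h9pq) hpq
  have h6G : (6 : ℂ) * (P τ * (9 * P τ - Q τ) * (P τ - Q τ)) ≠ 0 := mul_ne_zero (by norm_num) hG
  have hKG : ((Real.pi : ℂ) * I) * (P τ * (9 * P τ - Q τ) * (P τ - Q τ)) ≠ 0 := mul_ne_zero hKI hG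
  have h6G2 : ((6 : ℂ) * (P τ * (9 * P τ - Q τ) * (P τ - Q τ))) ^ 2 ≠ 0 := pow_ne_zero _ h6G
  have hden2 : P τ * (P τ - Q τ) * (9 * P τ - Q τ) ≠ 0 := mul_ne_zero (mul_ne_zero hp0 hpq) h9pq
  have hden3 : P τ ^ 2 * (P τ - Q τ) * (9 * P τ - Q τ) ≠ 0 :=
    mul_ne_zero (mul_ne_zero (pow_ne_zero _ hp0) hpq) h9pq
  have e1 : P τ / Q τ - 1 = (P τ - Q τ) / Q τ := by field_simp
  have e2 : P τ / Q τ - 1 / 9 = (9 * P τ - Q τ) / (9 * Q τ) := by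
    field_simp
  have hC : -(1 / (P τ / Q τ)) + 1 / ((P τ - Q τ) / Q τ) + 1 / ((9 * P τ - Q τ) / (9 * Q τ))
      = Q τ * (9 * P τ ^ 2 - Q τ ^ 2) / (P τ * (P τ - Q τ) * (9 * P τ - Q τ)) := by
    rw [one_div_div, one_div_div, one_div_div]
    rw [← neg_div, div_add_div _ _ hp0 hpq, div_add_div _ _ (mul_ne_zero hp0 hpq) h9pq,
      div_eq_div_iff (mul_ne_zero (mul_ne_zero hp0 hpq) h9pq) hden2]
    ring
  have hC2 : (P τ / Q τ - 1 / 3) /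
        (3 * (P τ / Q τ) ^ 2 * ((P τ - Q τ) / Q τ) * ((9 * P τ - Q τ) / (9 * Q τ)))
      = Q τ ^ 3 * (3 * P τ - Q τ) / (P τ ^ 2 * (P τ - Q τ) * (9 * P τ - Q τ)) := by
    have e3 : P τ / Q τ - 1 / 3 = (3 * P τ - Q τ) / (3 * Q τ) := by
      field_simp
    have hDen : 3 * (P τ / Q τ) ^ 2 * ((P τ - Q τ) / Q τ) * ((9 * P τ - Q τ) / (9 * Q τ))
        = (3 * P τ ^ 2 * (P τ - Q τ) * (9 * P τ - Q τ)) / (9 * Q τ ^ 4) := by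
      field_simp
    rw [e3, hDen, div_div_eq_mul_div, div_mul_eq_mul_div, div_div,
      div_eq_div_iff (mul_ne_zero (mul_ne_zero (by norm_num) hq0)
        (mul_ne_zero (mul_ne_zero (mul_ne_zero (by norm_num) (pow_ne_zero 2 hp0)) hpq) h9pq))
        hden3]
    ring
  rw [hP2 τ hτ, hdP1, hP1t, hf τ hτ, e1, e2, hFval, hP τ hτ, hQ τ hτ, hR τ hτ,
    div_div_eq_mul_div, hC, hC2, div_mul_eq_mul_div, div_div, div_mul_div_comm,
    div_mul_eq_mul_div,
    div_add_div _ _ (mul_ne_zero h6G2 hKG) (mul_ne_zero hden2 h6G),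
    div_sub_div _ _ (mul_ne_zero (mul_ne_zero h6G2 hKG) (mul_ne_zero hden2 h6G)) hden3,
    div_eq_zero_iff]
  left
  ring
end

section
/- Let {a_5(n)} be the complex sequence with a_5(0) = 1, a_5(-1) interpreted as 0, defined by the recurrence (n+1)^2 a_5(n+1) + ((11+15√5)/2 · n(n+1) + 5(1+√5)/2)·a_5(n) + (5(25+11√5)/2)·n^2·a_5(n-1) = 0 for n ≥ 0. Then the formal power series V(v) = Σ a_5(n) v^n satisfies Heun's equation V'' + (1/v + 1/(v + √5/25) + 1/(v - (11-5√5)/2))·V' + ((v - (15-7√5)/10)/(v(v + √5/25)(v - (11-5√5)/2)))·V = 0 as formal power series. -/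
/-- The generating function `V = Σ a₅(n) vⁿ` of the sequence defined by the
recurrence `(n+1)² a₅(n+1) + ((11+15√5)/2·n(n+1) + 5(1+√5)/2) a₅(n)
+ 5(25+11√5)/2·n² a₅(n-1) = 0`, `a₅(0) = 1`, satisfies Heun's equation (with
denominators cleared) as a formal power series. -/
theorem level5_sporadic_heun (a : ℕ → ℝ) (ha0 : a 0 = 1)
    (hrec : ∀ n : ℕ,
      ((n : ℝ) + 1) ^ 2 * a (n + 1)
        + ((11 + 15 * Real.sqrt 5) / 2 * (n : ℝ) * ((n : ℝ) + 1)
            + 5 * (1 + Real.sqrt 5) / 2) * a n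
        + (5 * (25 + 11 * Real.sqrt 5) / 2) * (n : ℝ) ^ 2 * a (n - 1) = 0) :
    letI X : PowerSeries ℝ := PowerSeries.X
    letI C : ℝ → PowerSeries ℝ := (PowerSeries.C : ℝ →+* PowerSeries ℝ)
    letI V : PowerSeries ℝ := PowerSeries.mk a
    X * (X + C (Real.sqrt 5 / 25)) * (X - C ((11 - 5 * Real.sqrt 5) / 2)) *
        (PowerSeries.derivative ℝ (PowerSeries.derivative ℝ V))
      + ((X + C (Real.sqrt 5 / 25)) * (X - C ((11 - 5 * Real.sqrt 5) / 2))
          + X * (X - C ((11 - 5 * Real.sqrt 5) / 2))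
          + X * (X + C (Real.sqrt 5 / 25))) * PowerSeries.derivative ℝ V
      + (X - C ((15 - 7 * Real.sqrt 5) / 10)) * V = 0 := by
  set s := Real.sqrt 5 with hsdef
  have hs : s ^ 2 = 5 := Real.sq_sqrt (by norm_num)
  have key :
      PowerSeries.X * (PowerSeries.X + (PowerSeries.C (R := ℝ)) (s / 25)) *
          (PowerSeries.X - (PowerSeries.C (R := ℝ)) ((11 - 5 * s) / 2)) *
          (PowerSeries.derivative ℝ (PowerSeries.derivative ℝ (PowerSeries.mk a)))
        + ((PowerSeries.X + (PowerSeries.C (R := ℝ)) (s / 25)) *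
              (PowerSeries.X - (PowerSeries.C (R := ℝ)) ((11 - 5 * s) / 2))
            + PowerSeries.X * (PowerSeries.X - (PowerSeries.C (R := ℝ)) ((11 - 5 * s) / 2))
            + PowerSeries.X * (PowerSeries.X + (PowerSeries.C (R := ℝ)) (s / 25))) *
            PowerSeries.derivative ℝ (PowerSeries.mk a)
        + (PowerSeries.X - (PowerSeries.C (R := ℝ)) ((15 - 7 * s) / 10)) * PowerSeries.mk a
      = PowerSeries.X ^ 3 * (PowerSeries.derivative ℝ (PowerSeries.derivative ℝ (PowerSeries.mk a)))
        + (PowerSeries.C (R := ℝ)) ((127 * s - 275) / 50) *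
            (PowerSeries.X ^ 2 * (PowerSeries.derivative ℝ (PowerSeries.derivative ℝ (PowerSeries.mk a))))
        - (PowerSeries.C (R := ℝ)) ((11 * s - 5 * s ^ 2) / 50) *
            (PowerSeries.X ^ 1 * (PowerSeries.derivative ℝ (PowerSeries.derivative ℝ (PowerSeries.mk a))))
        + (PowerSeries.C (R := ℝ)) 3 * (PowerSeries.X ^ 2 * PowerSeries.derivative ℝ (PowerSeries.mk a))
        + (PowerSeries.C (R := ℝ)) ((127 * s - 275) / 25) *
            (PowerSeries.X ^ 1 * PowerSeries.derivative ℝ (PowerSeries.mk a))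
        - (PowerSeries.C (R := ℝ)) ((11 * s - 5 * s ^ 2) / 50) * PowerSeries.derivative ℝ (PowerSeries.mk a)
        + PowerSeries.X ^ 1 * PowerSeries.mk a
        - (PowerSeries.C (R := ℝ)) ((15 - 7 * s) / 10) * PowerSeries.mk a := by
    have c1 : (PowerSeries.C (R := ℝ)) ((127 * s - 275) / 50)
        = (PowerSeries.C (R := ℝ)) (s / 25) - (PowerSeries.C (R := ℝ)) ((11 - 5 * s) / 2) := by
      rw [← map_sub]; congr 1; ring
    have c2 : (PowerSeries.C (R := ℝ)) ((11 * s - 5 * s ^ 2) / 50)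
        = (PowerSeries.C (R := ℝ)) (s / 25) * (PowerSeries.C (R := ℝ)) ((11 - 5 * s) / 2) := by
      rw [← map_mul]; congr 1; ring
    have c3 : (PowerSeries.C (R := ℝ)) ((127 * s - 275) / 25)
        = 2 * ((PowerSeries.C (R := ℝ)) (s / 25) - (PowerSeries.C (R := ℝ)) ((11 - 5 * s) / 2)) := by
      rw [show (127 * s - 275) / 25 = 2 * (s / 25 - (11 - 5 * s) / 2) by ring, map_mul,
        map_sub, map_ofNat]
    have c4 : (PowerSeries.C (R := ℝ)) (3 : ℝ) = (3 : PowerSeries ℝ) := map_ofNat _ 3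
    rw [c1, c2, c3, c4]
    ring
  rw [key]
  ext n
  simp only [map_add, map_sub, PowerSeries.coeff_C_mul, PowerSeries.coeff_X_pow_mul',
    PowerSeries.coeff_derivative, PowerSeries.coeff_mk, map_zero]
  match n with
  | 0 =>
    norm_num
    linear_combination ((25 - 11 * s) / 50) * hrec 0 + (a 1 / 10 + 11 / 20 * a 0) * hs
  | 1 =>
    norm_num
    linear_combination ((25 - 11 * s) / 50) * hrec 1
      + (4 * a 2 / 10 + 77 / 20 * a 1 + 121 / 20 * a 0) * hs
  | 2 =>
    norm_num
    linear_combination ((25 - 11 * s) / 50) * hrec 2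
      + (9 * a 3 / 10 + (33 * 6 / 20 + 11 / 20) * a 2 + 121 * 4 / 20 * a 1) * hs
  | (m + 3) =>
    have h3 : (3 : ℕ) ≤ m + 3 := by omega
    have h2 : (2 : ℕ) ≤ m + 3 := by omega
    have h1 : (1 : ℕ) ≤ m + 3 := by omega
    simp only [if_pos h3, if_pos h2, if_pos h1]
    have e3 : m + 3 - 3 = m := by omega
    have e2 : m + 3 - 2 = m + 1 := by omega
    have e1 : m + 3 - 1 = m + 2 := by omega
    rw [e3, e2, e1]
    have hr := hrec (m + 3)
    have er : m + 3 - 1 = m + 2 := by omega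
    rw [er] at hr
    push_cast at hr ⊢
    linear_combination ((25 - 11 * s) / 50) * hr
      + (((m : ℝ) + 4) ^ 2 * a (m + 4) / 10
        + (33 * ((m : ℝ) + 3) * ((m : ℝ) + 4) / 20 + 11 / 20) * a (m + 3)
        + 121 * ((m : ℝ) + 3) ^ 2 / 20 * a (m + 2)) * hs
end

section
/- Suppose R, U, S : ℍ → ℂ satisfy DR = (27R^3 + 36R^2U + 5RU^2 + RS)/12, DU = (-27R^2U - 24RU^2 - U^3 + SU)/12, DS = (-729R^4 - 972R^3U - 270R^2U^2 - 12RU^3 - U^4 + S^2)/12 with D = (1/(2πi))d/dτ. Let u = R/U and regard U as a function of u. Then U''(u) + (1/u + 1/(u+1) + 1/(u+1/9))·U'(u) + ((u+1/3)/(u(u+1)(u+1/9)))·U(u) = 0. -/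
set_option maxHeartbeats 3000000

open Complex Filter Topology Set Function

/-- Level-6 system (fourth form): `U` as a function of `u = R/U` satisfies Heun's
equation with singularities at `0`, `-1`, `-1/9`. -/
theorem level6_U_heun (R U S u U1 U2 : ℂ → ℂ)
    (hR : ∀ τ : ℂ, 0 < τ.im →
      deriv R τ = (2 * (Real.pi : ℂ) * I) *
        ((27 * R τ ^ 3 + 36 * R τ ^ 2 * U τ + 5 * R τ * U τ ^ 2 + R τ * S τ) / 12))
    (hU : ∀ τ : ℂ, 0 < τ.im →
      deriv U τ = (2 * (Real.pi : ℂ) * I) *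
        ((-27 * R τ ^ 2 * U τ - 24 * R τ * U τ ^ 2 - U τ ^ 3 + S τ * U τ) / 12))
    (hS : ∀ τ : ℂ, 0 < τ.im →
      deriv S τ = (2 * (Real.pi : ℂ) * I) *
        ((-729 * R τ ^ 4 - 972 * R τ ^ 3 * U τ - 270 * R τ ^ 2 * U τ ^ 2
            - 12 * R τ * U τ ^ 3 - U τ ^ 4 + S τ ^ 2) / 12))
    (hU0 : ∀ τ : ℂ, 0 < τ.im → U τ ≠ 0)
    (hu : ∀ τ : ℂ, 0 < τ.im → u τ = R τ / U τ)
    (hu' : ∀ τ : ℂ, 0 < τ.im → deriv u τ ≠ 0)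
    (hU1 : ∀ τ : ℂ, 0 < τ.im → U1 τ = deriv U τ / deriv u τ)
    (hU2 : ∀ τ : ℂ, 0 < τ.im → U2 τ = deriv U1 τ / deriv u τ) :
    ∀ τ : ℂ, 0 < τ.im →
      U2 τ + (1 / u τ + 1 / (u τ + 1) + 1 / (u τ + 1 / 9)) * U1 τ
        + ((u τ + 1 / 3) / (u τ * (u τ + 1) * (u τ + 1 / 9))) * U τ = 0 := by
  have hπ : ((Real.pi : ℂ)) ≠ 0 := ofReal_ne_zero.mpr Real.pi_ne_zero
  have hc0 : (2 * (Real.pi : ℂ) * I) ≠ 0 :=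
    mul_ne_zero (mul_ne_zero two_ne_zero hπ) I_ne_zero
  set H : Set ℂ := {τ : ℂ | 0 < τ.im} with hH
  have hHo : IsOpen H := isOpen_lt continuous_const Complex.continuous_im
  have hud : ∀ τ ∈ H, DifferentiableAt ℂ u τ := by
    intro τ hτ
    by_contra h
    exact hu' τ hτ (deriv_zero_of_not_differentiableAt h)
  have hRU : ∀ τ ∈ H, R τ = u τ * U τ := by
    intro τ hτ
    rw [hu τ hτ, div_mul_cancel₀ _ (hU0 τ hτ)]
  set V : Set ℂ := {τ : ℂ | 0 < τ.im ∧ u τ * (9 * u τ + 1) * (u τ + 1) ≠ 0} with hV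
  have hVn : ∀ τ ∈ V, V ∈ 𝓝 τ := by
    intro τ hτ
    have hcu : ContinuousAt u τ := (hud τ hτ.1).continuousAt
    have hcont : ContinuousAt (fun z => u z * (9 * u z + 1) * (u z + 1)) τ := by
      fun_prop
    filter_upwards [hcont.eventually_ne hτ.2, hHo.mem_nhds hτ.1] with z hz1 hz2
    exact ⟨hz2, hz1⟩
  have hVo : IsOpen V := isOpen_iff_mem_nhds.mpr hVn
  -- `U` is differentiable at each point of `V`
  have hUd : ∀ τ ∈ V, DifferentiableAt ℂ U τ := by
    intro τ hτ
    by_contra hdU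
    have hU0' := hU0 τ hτ.1
    have hu0 : u τ ≠ 0 := fun h => hτ.2 (by rw [h]; ring)
    have h := hU τ hτ.1
    rw [deriv_zero_of_not_differentiableAt hdU] at h
    rcases mul_eq_zero.mp h.symm with h3 | h3
    · exact hc0 h3
    · have h2 : (-27 * R τ ^ 2 * U τ - 24 * R τ * U τ ^ 2 - U τ ^ 3 + S τ * U τ) = 0 := by
        linear_combination 12 * h3
      have h1 : S τ = 27 * R τ ^ 2 + 24 * R τ * U τ + U τ ^ 2 := by
        have h4 : U τ * (S τ - (27 * R τ ^ 2 + 24 * R τ * U τ + U τ ^ 2)) = 0 := by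
          linear_combination h2
        rcases mul_eq_zero.mp h4 with h5 | h5
        · exact absurd h5 hU0'
        · exact sub_eq_zero.mp h5
      by_cases hdR : DifferentiableAt ℂ R τ
      · apply hdU
        have hev : U =ᶠ[𝓝 τ] fun z => R z / u z := by
          filter_upwards [hHo.mem_nhds hτ.1, ((hud τ hτ.1).continuousAt).eventually_ne hu0]
            with z hz1 hz2
          rw [hRU z hz1, mul_comm (u z) (U z), mul_div_cancel_right₀ _ hz2]
        exact ((hdR.div (hud τ hτ.1) hu0)).congr_of_eventuallyEq hev
      · have hR0 : R τ ≠ 0 := by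
          rw [hRU τ hτ.1]
          exact mul_ne_zero hu0 hU0'
        have hr := hR τ hτ.1
        rw [deriv_zero_of_not_differentiableAt hdR] at hr
        rcases mul_eq_zero.mp hr.symm with h5 | h5
        · exact hc0 h5
        · have h6 : 27 * R τ ^ 3 + 36 * R τ ^ 2 * U τ + 5 * R τ * U τ ^ 2 + R τ * S τ = 0 := by
            linear_combination 12 * h5
          rw [h1] at h6
          have h7 : R τ * ((9 * R τ + U τ) * (R τ + U τ)) = 0 := by linear_combination h6 / 6
          rcases mul_eq_zero.mp h7 with h8 | h8
          · exact hR0 h8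
          · apply hτ.2
            rw [hRU τ hτ.1] at h8
            rcases mul_eq_zero.mp h8 with h9 | h9
            · have h10 : (9 * u τ + 1) * U τ = 0 := by linear_combination h9
              rcases mul_eq_zero.mp h10 with h11 | h11
              · rw [h11]; ring
              · exact absurd h11 hU0'
            · have h10 : (u τ + 1) * U τ = 0 := by linear_combination h9
              rcases mul_eq_zero.mp h10 with h11 | h11
              · rw [h11]; ring
              · exact absurd h11 hU0'
  have hudiff : DifferentiableOn ℂ u H := fun τ' hτ' => (hud τ' hτ').differentiableWithinAt
  have huan : AnalyticOnNhd ℂ u H := hudiff.analyticOnNhd hHo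
  have hduan : AnalyticOnNhd ℂ (deriv u) H := huan.deriv
  have hUdiff : DifferentiableOn ℂ U V := fun τ' hτ' => (hUd τ' hτ').differentiableWithinAt
  have hUan : AnalyticOnNhd ℂ U V := hUdiff.analyticOnNhd hVo
  have hdUan : AnalyticOnNhd ℂ (deriv U) V := hUan.deriv
  have hRd : ∀ τ ∈ V, DifferentiableAt ℂ R τ := by
    intro τ hτ
    have hev : R =ᶠ[𝓝 τ] fun z => u z * U z := by
      filter_upwards [hHo.mem_nhds hτ.1] with z hz using hRU z hz
    exact ((hud τ hτ.1).mul (hUd τ hτ)).congr_of_eventuallyEq hev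
  have hSd : ∀ τ ∈ V, DifferentiableAt ℂ S τ := by
    intro τ hτ
    have hev : S =ᶠ[𝓝 τ] fun z =>
        27 * R z ^ 2 + 24 * R z * U z + U z ^ 2
          + (12 / (2 * (Real.pi : ℂ) * I)) * (deriv U z / U z) := by
      filter_upwards [hVn τ hτ] with z hz
      rw [hU z hz.1]
      field_simp [hU0 z hz.1]
      ring
    have h1 := hRd τ hτ
    have h2 := hUd τ hτ
    have h3 : DifferentiableAt ℂ (deriv U) τ := (hdUan τ hτ).differentiableAt
    have h4 : DifferentiableAt ℂ (fun z =>
        27 * R z ^ 2 + 24 * R z * U z + U z ^ 2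
          + (12 / (2 * (Real.pi : ℂ) * I)) * (deriv U z / U z)) τ := by
      apply DifferentiableAt.add
      · fun_prop
      · exact ((h3.div h2 (hU0 τ hτ.1))).const_mul _
    exact h4.congr_of_eventuallyEq hev
  -- the derivative of u on V
  have hduf : ∀ τ ∈ V, deriv u τ =
      2 * (Real.pi : ℂ) * I * (R τ * (9 * R τ + U τ) * (R τ + U τ)) / (2 * U τ) := by
    intro τ hτ
    have hev : u =ᶠ[𝓝 τ] fun z => R z / U z := by
      filter_upwards [hHo.mem_nhds hτ.1] with z hz using hu z hz
    rw [hev.deriv_eq, deriv_fun_div (hRd τ hτ) (hUd τ hτ) (hU0 τ hτ.1), hR τ hτ.1, hU τ hτ.1]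
    have hU0' := hU0 τ hτ.1
    field_simp
    ring
  intro τ hτ
  by_cases hgood : u τ * (9 * u τ + 1) * (u τ + 1) ≠ 0
  · -- good point: the main computation
    have hτV : τ ∈ V := ⟨hτ, hgood⟩
    have hU0' : U τ ≠ 0 := hU0 τ hτ
    have eU : HasDerivAt U (deriv U τ) τ := (hUd τ hτV).hasDerivAt
    have eR : HasDerivAt R (deriv R τ) τ := (hRd τ hτV).hasDerivAt
    have eS : HasDerivAt S (deriv S τ) τ := (hSd τ hτV).hasDerivAt
    have i2 := ((((((((eR.fun_pow 2).const_mul (-27 : ℂ)).fun_mul eU).fun_sub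
        ((eR.const_mul (24 : ℂ)).fun_mul (eU.fun_pow 2))).fun_sub (eU.fun_pow 3)).fun_add
        (eS.fun_mul eU)).div_const (12 : ℂ)).const_mul (2 * (Real.pi : ℂ) * I))
    have ev4 : deriv U =ᶠ[𝓝 τ] (fun z => 2 * (Real.pi : ℂ) * I *
        ((-27 * R z ^ 2 * U z - 24 * R z * U z ^ 2 - U z ^ 3 + S z * U z) / 12)) := by
      filter_upwards [hHo.mem_nhds hτ] with z hz using hU z hz
    have e4 := i2.congr_of_eventuallyEq ev4
    have h2U0 : (2 : ℂ) * U τ ≠ 0 := mul_ne_zero two_ne_zero hU0'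
    have i5 := (((eR.fun_mul ((eR.const_mul (9 : ℂ)).fun_add eU)).fun_mul (eR.fun_add eU)).const_mul
        (2 * (Real.pi : ℂ) * I)).fun_div (eU.const_mul (2 : ℂ)) h2U0
    have ev5 : deriv u =ᶠ[𝓝 τ] (fun z => 2 * (Real.pi : ℂ) * I *
        (R z * (9 * R z + U z) * (R z + U z)) / (2 * U z)) := by
      filter_upwards [hVn τ hτV] with z hz using hduf z hz
    have e5 := i5.congr_of_eventuallyEq ev5
    have hd0 : deriv u τ ≠ 0 := hu' τ hτ
    have e6 := e4.div e5 hd0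
    have ev6 : U1 =ᶠ[𝓝 τ] (fun z => deriv U z / deriv u z) := by
      filter_upwards [hHo.mem_nhds hτ] with z hz using hU1 z hz
    have e7 := e6.congr_of_eventuallyEq ev6
    have evprod : (fun z => U1 z * deriv u z) =ᶠ[𝓝 τ] deriv U := by
      filter_upwards [hHo.mem_nhds hτ] with z hz
      rw [hU1 z hz, div_mul_cancel₀ _ (hu' z hz)]
    have e8 := e4.congr_of_eventuallyEq evprod
    have huniq := (e7.mul e5).unique e8
    have hu0 : u τ ≠ 0 := fun h => hgood (by rw [h]; ring)
    have h9u : 9 * u τ + 1 ≠ 0 := fun h => hgood (by rw [h]; ring)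
    have hu1 : u τ + 1 ≠ 0 := fun h => hgood (by rw [h]; ring)
    have hu19 : u τ + 1 / 9 ≠ 0 := fun h => h9u (by linear_combination 9 * h)
    have hdu2 : deriv u τ = (Real.pi : ℂ) * I * (u τ * (9 * u τ + 1) * (u τ + 1)) * U τ ^ 2 := by
      rw [hduf τ hτV, hRU τ hτ]
      field_simp
    have hA : deriv (deriv U) τ = 2 * (Real.pi : ℂ) * I * ((-54 * (u τ * U τ) * (2 * (Real.pi : ℂ) * I * ((27 * (u τ * U τ) ^ 3 + 36 * (u τ * U τ) ^ 2 * U τ + 5 * (u τ * U τ) * U τ ^ 2 + (u τ * U τ) * S τ) / 12)) * U τ - 27 * (u τ * U τ) ^ 2 * (2 * (Real.pi : ℂ) * I * ((-27 * (u τ * U τ) ^ 2 * U τ - 24 * (u τ * U τ) * U τ ^ 2 - U τ ^ 3 + S τ * U τ) / 12)) - 24 * (2 * (Real.pi : ℂ) * I * ((27 * (u τ * U τ) ^ 3 + 36 * (u τ * U τ) ^ 2 * U τ + 5 * (u τ * U τ) * U τ ^ 2 + (u τ * U τ) * S τ) / 12)) * U τ ^ 2 - 48 * (u τ * U τ) *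 U τ * (2 * (Real.pi : ℂ) * I * ((-27 * (u τ * U τ) ^ 2 * U τ - 24 * (u τ * U τ) * U τ ^ 2 - U τ ^ 3 + S τ * U τ) / 12)) - 3 * U τ ^ 2 * (2 * (Real.pi : ℂ) * I * ((-27 * (u τ * U τ) ^ 2 * U τ - 24 * (u τ * U τ) * U τ ^ 2 - U τ ^ 3 + S τ * U τ) / 12)) + (2 * (Real.pi : ℂ) * I * ((-729 * (u τ * U τ) ^ 4 - 972 * (u τ * U τ) ^ 3 * U τ - 270 * (u τ * U τ) ^ 2 * U τ ^ 2 - 12 * (u τ * U τ) * U τ ^ 3 - U τ ^ 4 + S τ ^ 2) / 12)) * U τ + S τ * (2 * (Real.pi : ℂ) * I * ((-27 * (u τ * U τ) ^ 2 * U τ - 24 * (u τ * U τ) * U τ ^ 2 - U τ ^ 3 + S τ * U τ) / 12))) / 12) := by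
      rw [e4.deriv, hR τ hτ, hU τ hτ, hS τ hτ, hRU τ hτ]
      ring
    have hB : deriv (deriv u) τ = (Real.pi : ℂ) * I * (((2 * (Real.pi : ℂ) * I * ((27 * (u τ * U τ) ^ 3 + 36 * (u τ * U τ) ^ 2 * U τ + 5 * (u τ * U τ) * U τ ^ 2 + (u τ * U τ) * S τ) / 12)) * (9 * (u τ * U τ) + U τ) * ((u τ * U τ) + U τ) + (u τ * U τ) * (9 * (2 * (Real.pi : ℂ) * I * ((27 * (u τ * U τ) ^ 3 + 36 * (u τ * U τ) ^ 2 * U τ + 5 * (u τ * U τ) * U τ ^ 2 + (u τ * U τ) * S τ) / 12)) + (2 * (Real.pi : ℂ) * I * ((-27 * (u τ * U τ) ^ 2 * U τ - 24 * (u τ * U τ) * U τ ^ 2 - U τ ^ 3 + S τ * U τ) / 12))) * ((u τ * U τ) + U τ) + (u τ * U τ) * (9 * (u τ * U τ) + U τ) * ((2 * (Real.pi : ℂ) * I * ((27 * (u τ * U τ) ^ 3 + 36 * (u τ * U τ) ^ 2 * U τ + 5 * (u τ * U τ) * U τ ^ 2 + (u τ * U τ) * S τ) / 12)) + (2 * (Real.pi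 : ℂ) * I * ((-27 * (u τ * U τ) ^ 2 * U τ - 24 * (u τ * U τ) * U τ ^ 2 - U τ ^ 3 + S τ * U τ) / 12)))) * U τ - ((u τ * U τ) * (9 * (u τ * U τ) + U τ) * ((u τ * U τ) + U τ)) * (2 * (Real.pi : ℂ) * I * ((-27 * (u τ * U τ) ^ 2 * U τ - 24 * (u τ * U τ) * U τ ^ 2 - U τ ^ 3 + S τ * U τ) / 12))) / U τ ^ 2 := by
      rw [e5.deriv, hR τ hτ, hU τ hτ, hRU τ hτ,
        div_eq_div_iff (pow_ne_zero 2 h2U0) (pow_ne_zero 2 hU0')]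
      ring
    have hU1v : U1 τ = (S τ - (27 * u τ ^ 2 + 24 * u τ + 1) * U τ ^ 2) /
        (6 * (u τ * (9 * u τ + 1) * (u τ + 1)) * U τ) := by
      rw [hU1 τ hτ, hU τ hτ, hdu2, hRU τ hτ,
        div_eq_div_iff (mul_ne_zero (mul_ne_zero (mul_ne_zero hπ I_ne_zero) hgood)
          (pow_ne_zero 2 hU0'))
          (mul_ne_zero (mul_ne_zero (by norm_num) hgood) hU0')]
      ring
    have hdU1 : deriv U1 τ = (deriv (deriv U) τ - U1 τ * deriv (deriv u) τ) / deriv u τ := by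
      rw [eq_div_iff hd0, e7.deriv, e5.deriv, e4.deriv]
      linear_combination huniq
    have hU2v : U2 τ = (deriv (deriv U) τ - U1 τ * deriv (deriv u) τ) / (deriv u τ) ^ 2 := by
      rw [hU2 τ hτ, hdU1, div_div, ← sq]
    set P3 : ℂ := u τ * (9 * u τ + 1) * (u τ + 1) with hP3
    have h63 : 6 * P3 * U τ ^ 3 ≠ 0 :=
      mul_ne_zero (mul_ne_zero (by norm_num) hgood) (pow_ne_zero 3 hU0')
    have hUB : U1 τ * deriv (deriv u) τ = (S τ - (27 * u τ ^ 2 + 24 * u τ + 1) * U τ ^ 2) * ((Real.pi : ℂ) * I * (((2 * (Real.pi : ℂ) * I * ((27 * (u τ * U τ) ^ 3 + 36 * (u τ * U τ) ^ 2 * U τ + 5 * (u τ * U τ) * U τ ^ 2 + (u τ * U τ) * S τ) / 12)) * (9 * (u τ * U τ) + U τ) * ((u τ * U τ) + U τ) + (u τ * U τ) * (9 * (2 * (Real.pi : ℂ) * I * ((27 * (u τ * U τ) ^ 3 + 36 * (u τ * U τ) ^ 2 * U τ + 5 * (u τ * U τ) * U τ ^ 2 + (u τ * U τ) * S τ) /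 12)) + (2 * (Real.pi : ℂ) * I * ((-27 * (u τ * U τ) ^ 2 * U τ - 24 * (u τ * U τ) * U τ ^ 2 - U τ ^ 3 + S τ * U τ) / 12))) * ((u τ * U τ) + U τ) + (u τ * U τ) * (9 * (u τ * U τ) + U τ) * ((2 * (Real.pi : ℂ) * I * ((27 * (u τ * U τ) ^ 3 + 36 * (u τ * U τ) ^ 2 * U τ + 5 * (u τ * U τ) * U τ ^ 2 + (u τ * U τ) * S τ) / 12)) + (2 * (Real.pi : ℂ) * I * ((-27 * (u τ * U τ) ^ 2 * U τ - 24 * (u τ * U τ) * U τ ^ 2 - U τ ^ 3 + S τ * U τ) / 12)))) * U τ - ((u τ * U τ) * (9 * (u τ * U τ) + U τ) * ((u τ * U τ) + U τ)) * (2 * (Real.pi : ℂ) * I * ((-27 * (u τ * U τ) ^ 2 * U τ - 24 * (u τ * U τ) * U τ ^ 2 - U τ ^ 3 + S τ * U τ) / 12)))) / (6 * P3 * U τ ^ 3) := by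
      rw [hU1v, hB, div_mul_div_comm,
        show (6 * P3 * U τ) * U τ ^ 2 = 6 * P3 * U τ ^ 3 from by ring]
    have hNUM : deriv (deriv U) τ - U1 τ * deriv (deriv u) τ =
        ((2 * (Real.pi : ℂ) * I * ((-54 * (u τ * U τ) * (2 * (Real.pi : ℂ) * I * ((27 * (u τ * U τ) ^ 3 + 36 * (u τ * U τ) ^ 2 * U τ + 5 * (u τ * U τ) * U τ ^ 2 + (u τ * U τ) * S τ) / 12)) * U τ - 27 * (u τ * U τ) ^ 2 * (2 * (Real.pi : ℂ) * I * ((-27 * (u τ * U τ) ^ 2 * U τ - 24 * (u τ * U τ) * U τ ^ 2 - U τ ^ 3 + S τ * U τ) / 12)) - 24 * (2 * (Real.pi : ℂ) * I * ((27 * (u τ * U τ) ^ 3 + 36 * (u τ * U τ) ^ 2 * U τ + 5 * (u τ * U τ) * U τ ^ 2 + (u τ * U τ) * S τ) / 12)) * U τ ^ 2 - 48 * (u τ * U τ) * U τ * (2 * (Real.pi : ℂ) * I * ((-27 * (u τ * U τ) ^ 2 * U τ - 24 * (u τ * U τ) * U τ ^ 2 - U τ ^ 3 + S τ * U τ) /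 12)) - 3 * U τ ^ 2 * (2 * (Real.pi : ℂ) * I * ((-27 * (u τ * U τ) ^ 2 * U τ - 24 * (u τ * U τ) * U τ ^ 2 - U τ ^ 3 + S τ * U τ) / 12)) + (2 * (Real.pi : ℂ) * I * ((-729 * (u τ * U τ) ^ 4 - 972 * (u τ * U τ) ^ 3 * U τ - 270 * (u τ * U τ) ^ 2 * U τ ^ 2 - 12 * (u τ * U τ) * U τ ^ 3 - U τ ^ 4 + S τ ^ 2) / 12)) * U τ + S τ * (2 * (Real.pi : ℂ) * I * ((-27 * (u τ * U τ) ^ 2 * U τ - 24 * (u τ * U τ) * U τ ^ 2 - U τ ^ 3 + S τ * U τ) / 12))) / 12)) * (6 * P3 * U τ ^ 3) - (S τ - (27 * u τ ^ 2 + 24 * u τ + 1) * U τ ^ 2) * ((Real.pi : ℂ) * I * (((2 * (Real.pi : ℂ) * I * ((27 * (u τ * U τ) ^ 3 + 36 * (u τ * U τ) ^ 2 * U τ + 5 * (u τ * U τ) * U τ ^ 2 + (u τ * U τ) * S τ) / 12)) * (9 * (u τ * U τ) + U τ) * ((u τ * U τ) + U τ) + (u τ * U τ) * (9 * (2 * (Real.pi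 : ℂ) * I * ((27 * (u τ * U τ) ^ 3 + 36 * (u τ * U τ) ^ 2 * U τ + 5 * (u τ * U τ) * U τ ^ 2 + (u τ * U τ) * S τ) / 12)) + (2 * (Real.pi : ℂ) * I * ((-27 * (u τ * U τ) ^ 2 * U τ - 24 * (u τ * U τ) * U τ ^ 2 - U τ ^ 3 + S τ * U τ) / 12))) * ((u τ * U τ) + U τ) + (u τ * U τ) * (9 * (u τ * U τ) + U τ) * ((2 * (Real.pi : ℂ) * I * ((27 * (u τ * U τ) ^ 3 + 36 * (u τ * U τ) ^ 2 * U τ + 5 * (u τ * U τ) * U τ ^ 2 + (u τ * U τ) * S τ) / 12)) + (2 * (Real.pi : ℂ) * I * ((-27 * (u τ * U τ) ^ 2 * U τ - 24 * (u τ * U τ) * U τ ^ 2 - U τ ^ 3 + S τ * U τ) / 12)))) * U τ - ((u τ * U τ) * (9 * (u τ * U τ) + U τ) * ((u τ * U τ) + U τ)) * (2 * (Real.pi : ℂ) * I * ((-27 * (u τ * U τ) ^ 2 * U τ - 24 * (u τ * U τ) * U τ ^ 2 - U τ ^ 3 + S τ * U τ) / 12))))) / (6 * P3 * U τ ^ 3)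 := by
      rw [hA, hUB, eq_div_iff h63, sub_mul, div_mul_cancel₀ _ h63]
    have hC1 : 1 / u τ + 1 / (u τ + 1) + 1 / (u τ + 1 / 9) =
        ((u τ + 1) * (u τ + 1 / 9) + u τ * (u τ + 1 / 9) + u τ * (u τ + 1)) /
          (u τ * (u τ + 1) * (u τ + 1 / 9)) := by
      rw [div_add_div _ _ hu0 hu1, div_add_div _ _ (mul_ne_zero hu0 hu1) hu19,
        div_eq_div_iff (mul_ne_zero (mul_ne_zero hu0 hu1) hu19)
          (mul_ne_zero (mul_ne_zero hu0 hu1) hu19)]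
      ring
    have hD1 : (6 * P3 * U τ ^ 3) * ((Real.pi : ℂ) * I * P3 * U τ ^ 2) ^ 2 ≠ 0 :=
      mul_ne_zero h63 (pow_ne_zero 2 (mul_ne_zero (mul_ne_zero (mul_ne_zero hπ I_ne_zero) hgood)
        (pow_ne_zero 2 hU0')))
    have hD3 : u τ * (u τ + 1) * (u τ + 1 / 9) ≠ 0 :=
      mul_ne_zero (mul_ne_zero hu0 hu1) hu19
    have hD2 : (u τ * (u τ + 1) * (u τ + 1 / 9)) * (6 * P3 * U τ) ≠ 0 :=
      mul_ne_zero hD3 (mul_ne_zero (mul_ne_zero (by norm_num) hgood) hU0')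
    rw [hU2v, hNUM, div_div, hdu2, hC1, hU1v, div_mul_div_comm, div_mul_eq_mul_div,
      div_add_div _ _ hD1 hD2, div_add_div _ _ (mul_ne_zero hD1 hD2) hD3, div_eq_zero_iff]
    refine Or.inl ?_
    rw [hP3]
    ring
  · -- bad point: impossible
    push_neg at hgood
    exfalso
    have hτH : τ ∈ H := hτ
    have eu : HasDerivAt u (deriv u τ) τ := (hud τ hτH).hasDerivAt
    have hd0 : deriv u τ ≠ 0 := hu' τ hτ
    have hfd : HasDerivAt (fun z => u z * (9 * u z + 1) * (u z + 1))
        (deriv u τ * ((9 * u τ + 1) * (u τ + 1) + 9 * u τ * (u τ + 1) + u τ * (9 * u τ + 1))) τ := by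
      have h := (eu.fun_mul ((eu.const_mul (9 : ℂ)).fun_add (hasDerivAt_const τ (1 : ℂ)))).fun_mul
        (eu.fun_add (hasDerivAt_const τ (1 : ℂ)))
      refine h.congr_deriv ?_
      ring
    have hvf0 : deriv u τ *
        ((9 * u τ + 1) * (u τ + 1) + 9 * u τ * (u τ + 1) + u τ * (9 * u τ + 1)) ≠ 0 := by
      refine mul_ne_zero hd0 ?_
      rcases mul_eq_zero.mp hgood with h12 | h3
      · rcases mul_eq_zero.mp h12 with h1 | h2
        · rw [h1]; norm_num
        · have hv : u τ = -1 / 9 := by linear_combination h2 / 9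
          rw [hv]; norm_num
      · have hv : u τ = -1 := by linear_combination h3
        rw [hv]; norm_num
    have hslope := hasDerivAt_iff_tendsto_slope.mp hfd
    have hfne : ∀ᶠ z in 𝓝[≠] τ, u z * (9 * u z + 1) * (u z + 1) ≠ 0 := by
      filter_upwards [hslope.eventually_ne hvf0, self_mem_nhdsWithin] with z hz1 hz2 h0
      apply hz1
      rw [slope_def_field, h0, hgood]
      simp
    have hevV : ∀ᶠ z in 𝓝[≠] τ, z ∈ V := by
      filter_upwards [hfne, mem_nhdsWithin_of_mem_nhds (hHo.mem_nhds hτH)] with z h1 h2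
      exact ⟨h2, h1⟩
    have hqA : AnalyticAt ℂ (fun z => deriv u z * ((Real.pi : ℂ) * I)⁻¹) τ :=
      (hduan τ hτH).mul analyticAt_const
    have hq0 : deriv u τ * ((Real.pi : ℂ) * I)⁻¹ ≠ 0 :=
      mul_ne_zero hd0 (inv_ne_zero (mul_ne_zero hπ I_ne_zero))
    have hfq : ∀ z ∈ V, (u z * (9 * u z + 1) * (u z + 1)) * U z ^ 2
        = deriv u z * ((Real.pi : ℂ) * I)⁻¹ := by
      intro z hz
      rw [hduf z hz, hRU z hz.1]
      have h1 := hU0 z hz.1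
      field_simp
    have hWd : ∀ᶠ z in 𝓝[≠] τ, DifferentiableAt ℂ
        (Function.update (fun z => (u z * (9 * u z + 1) * (u z + 1)) * U z) τ 0) z := by
      filter_upwards [hevV, self_mem_nhdsWithin] with z hzV hzne
      have hdu := hud z hzV.1
      have h1 : DifferentiableAt ℂ (fun z => (u z * (9 * u z + 1) * (u z + 1)) * U z) z :=
        ((hdu.mul ((hdu.const_mul 9).add (differentiableAt_const 1))).mul
          (hdu.add (differentiableAt_const 1))).mul (hUd z hzV)
      refine h1.congr_of_eventuallyEq ?_
      filter_upwards [isOpen_ne.mem_nhds (Set.mem_compl_singleton_iff.mp hzne)] with w hw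
      exact Function.update_of_ne hw _ _
    have hWc : ContinuousAt
        (Function.update (fun z => (u z * (9 * u z + 1) * (u z + 1)) * U z) τ 0) τ := by
      rw [continuousAt_update_same, tendsto_zero_iff_norm_tendsto_zero]
      have hcu : ContinuousAt u τ := (hud τ hτH).continuousAt
      have hcq : ContinuousAt (fun z => deriv u z * ((Real.pi : ℂ) * I)⁻¹) τ := hqA.continuousAt
      have h2 : ContinuousAt (fun z => (u z * (9 * u z + 1) * (u z + 1)) *
          (deriv u z * ((Real.pi : ℂ) * I)⁻¹)) τ := by fun_prop
      have h3 : Tendsto (fun z => (u z * (9 * u z + 1) * (u z + 1)) *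
          (deriv u z * ((Real.pi : ℂ) * I)⁻¹)) (𝓝[≠] τ) (𝓝 0) := by
        have h4 := h2.tendsto.mono_left (nhdsWithin_le_nhds (s := {τ}ᶜ))
        rwa [hgood, zero_mul] at h4
      have h5 : Tendsto (fun z => Real.sqrt ‖(u z * (9 * u z + 1) * (u z + 1)) *
          (deriv u z * ((Real.pi : ℂ) * I)⁻¹)‖) (𝓝[≠] τ) (𝓝 0) := by
        have h6 := (Real.continuous_sqrt.tendsto ‖(0 : ℂ)‖).comp h3.norm
        simpa only [norm_zero, Real.sqrt_zero, Function.comp_def] using h6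
      refine h5.congr' ?_
      filter_upwards [hevV] with z hz
      have e1 : (u z * (9 * u z + 1) * (u z + 1)) * (deriv u z * ((Real.pi : ℂ) * I)⁻¹)
          = ((u z * (9 * u z + 1) * (u z + 1)) * U z) ^ 2 := by
        rw [← hfq z hz]; ring
      rw [e1, norm_pow, Real.sqrt_sq (norm_nonneg _)]
    have hWt : AnalyticAt ℂ
        (Function.update (fun z => (u z * (9 * u z + 1) * (u z + 1)) * U z) τ 0) τ :=
      Complex.analyticAt_of_differentiable_on_punctured_nhds_of_continuousAt hWd hWc
    have hWt0 : (Function.update (fun z => (u z * (9 * u z + 1) * (u z + 1)) * U z) τ 0) τ = 0 :=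
      Function.update_self _ _ _
    have hsq : (fun z =>
        (Function.update (fun z => (u z * (9 * u z + 1) * (u z + 1)) * U z) τ 0) z ^ 2)
        =ᶠ[𝓝 τ] (fun z => (u z * (9 * u z + 1) * (u z + 1)) *
          (deriv u z * ((Real.pi : ℂ) * I)⁻¹)) := by
      have h1 : ∀ᶠ z in 𝓝[≠] τ,
          (Function.update (fun z => (u z * (9 * u z + 1) * (u z + 1)) * U z) τ 0) z ^ 2
          = (u z * (9 * u z + 1) * (u z + 1)) * (deriv u z * ((Real.pi : ℂ) * I)⁻¹) := by
        filter_upwards [hevV, self_mem_nhdsWithin] with z hz hne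
        rw [Function.update_of_ne (Set.mem_compl_singleton_iff.mp hne), ← hfq z hz]
        ring
      rw [eventually_nhdsWithin_iff] at h1
      filter_upwards [h1] with z hz
      by_cases hzτ : z = τ
      · subst hzτ
        rw [hWt0, hgood]
        ring
      · exact hz (by simpa using hzτ)
    have hqd : DifferentiableAt ℂ (fun z => deriv u z * ((Real.pi : ℂ) * I)⁻¹) τ :=
      hqA.differentiableAt
    have hFne : deriv (fun z => (u z * (9 * u z + 1) * (u z + 1)) *
        (deriv u z * ((Real.pi : ℂ) * I)⁻¹)) τ ≠ 0 := by
      rw [deriv_fun_mul hfd.differentiableAt hqd, hfd.deriv, hgood, zero_mul, add_zero]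
      exact mul_ne_zero hvf0 hq0
    rcases eq_or_ne (analyticOrderAt
        (Function.update (fun z => (u z * (9 * u z + 1) * (u z + 1)) * U z) τ 0) τ) ⊤ with ho | ho
    · have hz0 := analyticOrderAt_eq_top.mp ho
      apply hFne
      have hev0 : (fun z => (u z * (9 * u z + 1) * (u z + 1)) *
          (deriv u z * ((Real.pi : ℂ) * I)⁻¹)) =ᶠ[𝓝 τ] (fun _ => (0 : ℂ)) := by
        filter_upwards [hsq, hz0] with z h1 h2
        rw [← h1, h2]
        ring
      rw [hev0.deriv_eq]
      simp
    · lift analyticOrderAt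
        (Function.update (fun z => (u z * (9 * u z + 1) * (u z + 1)) * U z) τ 0) τ to ℕ using ho with n hn
      obtain ⟨g, hgA, hg0, hgev⟩ := (hWt.analyticOrderAt_eq_natCast (n := n)).mp hn.symm
      have hn0 : n ≠ 0 := by
        intro h
        subst h
        have h1 := hgev.self_of_nhds
        rw [hWt0, sub_self] at h1
        simp at h1
        exact hg0 h1.symm
      have hFev : (fun z => (u z * (9 * u z + 1) * (u z + 1)) *
          (deriv u z * ((Real.pi : ℂ) * I)⁻¹)) =ᶠ[𝓝 τ]
          (fun z => (z - τ) ^ (2 * n) * g z ^ 2) := by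
        filter_upwards [hsq, hgev] with z h1 h2
        rw [← h1, h2]
        simp only [smul_eq_mul]
        ring
      apply hFne
      have hd1 : HasDerivAt (fun z => (z - τ) ^ (2 * n))
          ((2 * n : ℕ) * (τ - τ) ^ (2 * n - 1) * 1) τ :=
        ((hasDerivAt_id τ).sub_const τ).pow (2 * n)
      have hd2 := (hgA.differentiableAt.hasDerivAt).fun_pow 2
      rw [hFev.deriv_eq, (hd1.fun_mul hd2).deriv, sub_self,
        zero_pow (by omega : 2 * n - 1 ≠ 0), zero_pow (by omega : 2 * n ≠ 0)]
      ring
end
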